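/- For every rooted graph (G,v) with node set V: (1) tree-width(G) − 1 ≤ ego-rank(G,v) ≤ |V|; (2) ego-rank(G,v) = 0 if and only if G is acyclic; (3) ego-rank(G,v) ≤ 1 whenever (G,v) is c-acyclic (and hence ego-rank(G,v) = 1 if (G,v) is c-acyclic and G has a cycle). -/

import Mathlib

open Classical

/-! ### Graphs with `p` binary node features -/

/-- A finite undirected graph with node labels over `p` binary features. -/
structure LGraph (p : ℕ) : Type 1 where
  V : Type
  fintypeV : Fintype V
  decEqV : DecidableEq V
  adj : V → V → Prop
  symm : ∀ {u v}, adj u v → adj v u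
  irrefl : ∀ v, ¬ adj v v
  lab : V → Fin p → Prop

attribute [instance] LGraph.fintypeV LGraph.decEqV

namespace LGraph

variable {p : ℕ}

/-- The finset of neighbours of a node. -/
noncomputable def nbrFinset (G : LGraph p) (v : G.V) : Finset G.V :=
  Finset.univ.filter (fun u => G.adj v u)

/-- Multi-hot label encoding. -/
noncomputable def embG (G : LGraph p) (v : G.V) : Fin p → ℝ :=
  fun i => if G.lab v i then 1 else 0

/-- `G.within v r u` : node `u` is at distance at most `r` from `v`. -/
def within (G : LGraph p) (v : G.V) : ℕ → G.V → Prop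
  | 0 => fun u => u = v
  | (r+1) => fun u => G.within v r u ∨ ∃ w, G.within v r w ∧ G.adj w u

theorem within_self (G : LGraph p) (v : G.V) : ∀ r, G.within v r v
  | 0 => rfl
  | (r+1) => Or.inl (G.within_self v r)

/-- Induced subgraph on a set of nodes. -/
noncomputable def induce (G : LGraph p) (S : Set G.V) : LGraph p where
  V := {u // u ∈ S}
  fintypeV := Fintype.ofFinite _
  decEqV := inferInstance
  adj a b := G.adj a.1 b.1
  symm h := G.symm h
  irrefl a h := G.irrefl a.1 h
  lab a := G.lab a.1

/-- `G_v^r` : the induced subgraph on the radius-`r` neighbourhood of `v`. -/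
noncomputable def ball (G : LGraph p) (v : G.V) (r : ℕ) : LGraph p :=
  G.induce {u | G.within v r u}

/-- The centre of `G_v^r`, as a node of `G_v^r`. -/
noncomputable def ballCenter (G : LGraph p) (v : G.V) (r : ℕ) : (G.ball v r).V :=
  ⟨v, G.within_self v r⟩

end LGraph

/-! ### GNNs -/

/-- A single message-passing layer: aggregation over the multiset of neighbour
embeddings and combination of the node embedding (concatenated via `Fin.append`)
with the aggregated value. -/
structure GNNLayer (Din Dout : ℕ) : Type where
  agg : Multiset (Fin Din → ℝ) → (Fin Din → ℝ)
  com : (Fin (Din + Din) → ℝ) → (Fin Dout → ℝ)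

/-- A `(D,D')`-GNN: a nonempty sequence of layers with matching dimensions. -/
inductive GNN : ℕ → ℕ → Type
  | last {D D'} (l : GNNLayer D D') : GNN D D'
  | cons {D Dm D'} (l : GNNLayer D Dm) (rest : GNN Dm D') : GNN D D'

noncomputable def GNNLayer.apply {p Din Dout : ℕ} (l : GNNLayer Din Dout) (G : LGraph p)
    (emb : G.V → Fin Din → ℝ) : G.V → Fin Dout → ℝ :=
  fun v => l.com (Fin.append (emb v) (l.agg ((G.nbrFinset v).val.map emb)))

/-- Running a GNN on an embedded graph. -/
noncomputable def GNN.run {p : ℕ} : {D D' : ℕ} → GNN D D' → (G : LGraph p) →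
    (G.V → Fin D → ℝ) → (G.V → Fin D' → ℝ)
  | _, _, .last l, G, emb => l.apply G emb
  | _, _, .cons l rest, G, emb => rest.run G (l.apply G emb)

/-- The node classifier of a `(p,1)`-GNN (as a proposition: value `1` ↔ output `> 0`). -/
def GNN.clsP {p : ℕ} (A : GNN p 1) (G : LGraph p) (v : G.V) : Prop :=
  0 < A.run G G.embG v 0

/-- The node classifier of a `(p,1)`-GNN, as a boolean value. -/
noncomputable def GNN.cls {p : ℕ} (A : GNN p 1) (G : LGraph p) (v : G.V) : Bool :=
  if A.clsP G v then true else false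

/-! ### Hierarchical Ego GNNs -/

/-- A `(D,D')`-HE-GNN of nesting depth `d`. -/
inductive HEGNN : ℕ → ℕ → ℕ → Type
  | base {D D'} (A : GNN D D') : HEGNN 0 D D'
  | nest {d D D'' D'} (B : HEGNN d (D+1) D'') (C : GNN (D + D'') D') : HEGNN (d+1) D D'

noncomputable def HEGNN.run {p : ℕ} : {d D D' : ℕ} → HEGNN d D D' → (G : LGraph p) →
    (G.V → Fin D → ℝ) → (G.V → Fin D' → ℝ)
  | _, _, _, .base A, G, emb => A.run G emb
  | _, _, _, .nest B C, G, emb =>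
      C.run G (fun v => Fin.append (emb v)
        (B.run G (fun u => Fin.append (emb u) (fun _ => if u = v then (1:ℝ) else 0)) v))

def HEGNN.clsP {p d : ℕ} (A : HEGNN d p 1) (G : LGraph p) (v : G.V) : Prop :=
  0 < A.run G G.embG v 0

noncomputable def HEGNN.cls {p d : ℕ} (A : HEGNN d p 1) (G : LGraph p) (v : G.V) : Bool :=
  if A.clsP G v then true else false

/-! ### Hierarchical Ego Subgraph GNNs -/

/-- A `(D,D')`-HES-GNN of depth `d`; each nesting step carries its own radius `r`. -/
inductive HESGNN : ℕ → ℕ → ℕ → Type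
  | base {D D'} (A : GNN D D') : HESGNN 0 D D'
  | nest {d D D'' D'} (r : ℕ) (B : HESGNN d (D+1) D'') (C : GNN (D + D'') D') :
      HESGNN (d+1) D D'

noncomputable def HESGNN.run {p : ℕ} : {d D D' : ℕ} → HESGNN d D D' → (G : LGraph p) →
    (G.V → Fin D → ℝ) → (G.V → Fin D' → ℝ)
  | _, _, _, .base A, G, emb => A.run G emb
  | _, _, _, .nest r B C, G, emb =>
      C.run G (fun v => Fin.append (emb v)
        (B.run (G.ball v r)
          (fun u => Fin.append (emb u.1) (fun _ => if u.1 = v then (1:ℝ) else 0))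
          (G.ballCenter v r)))

/-- All subgraph restrictions in the HES-GNN use radius `r`. -/
def HESGNN.radIs : {d D D' : ℕ} → ℕ → HESGNN d D D' → Prop
  | _, _, _, _, .base _ => True
  | _, _, _, r, .nest r' B _ => r' = r ∧ B.radIs r

def HESGNN.clsP {p d : ℕ} (A : HESGNN d p 1) (G : LGraph p) (v : G.V) : Prop :=
  0 < A.run G G.embG v 0

noncomputable def HESGNN.cls {p d : ℕ} (A : HESGNN d p 1) (G : LGraph p) (v : G.V) : Bool :=
  if A.clsP G v then true else false
/-! ### Graded modal logic GML -/

inductive GML (p : ℕ) : Type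
  | prop (i : Fin p)
  | top
  | and (φ ψ : GML p)
  | not (φ : GML p)
  | dia (k : ℕ) (φ : GML p)

/-- Satisfaction of a GML formula at a node. -/
def GML.sat {p : ℕ} (G : LGraph p) : GML p → G.V → Prop
  | .prop i, v => G.lab v i
  | .top, _ => True
  | .and φ ψ, v => φ.sat G v ∧ ψ.sat G v
  | .not φ, v => ¬ φ.sat G v
  | .dia k φ, v => k ≤ Nat.card {u : G.V // G.adj v u ∧ φ.sat G u}

/-! ### Graded hybrid logic GML(↓) -/

inductive GMLd (p : ℕ) : Type
  | prop (i : Fin p)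
  | var (x : ℕ)
  | top
  | and (φ ψ : GMLd p)
  | not (φ : GMLd p)
  | dia (k : ℕ) (φ : GMLd p)
  | bind (x : ℕ) (φ : GMLd p)

/-- Satisfaction of a GML(↓) formula at a node, relative to an assignment of
variables to (marked) nodes; `↓x.φ` marks the current node with `x`. -/
def GMLd.sat {p : ℕ} (G : LGraph p) : GMLd p → (ℕ → Option G.V) → G.V → Prop
  | .prop i, _, v => G.lab v i
  | .var x, g, v => g x = some v
  | .top, _, _ => True
  | .and φ ψ, g, v => φ.sat G g v ∧ ψ.sat G g v
  | .not φ, g, v => ¬ φ.sat G g v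
  | .dia k φ, g, v => k ≤ Nat.card {u : G.V // G.adj v u ∧ φ.sat G g u}
  | .bind x φ, g, v => φ.sat G (Function.update g x (some v)) v

def GMLd.free {p : ℕ} : GMLd p → Set ℕ
  | .prop _ => ∅
  | .var x => {x}
  | .top => ∅
  | .and φ ψ => φ.free ∪ ψ.free
  | .not φ => φ.free
  | .dia _ φ => φ.free
  | .bind x φ => φ.free \ {x}

/-- A sentence has no free variables. -/
def GMLd.Sentence {p : ℕ} (φ : GMLd p) : Prop := φ.free = ∅

/-- The ↓-nesting-depth of a formula. -/
def GMLd.bindDepth {p : ℕ} : GMLd p → ℕ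
  | .prop _ => 0
  | .var _ => 0
  | .top => 0
  | .and φ ψ => max φ.bindDepth ψ.bindDepth
  | .not φ => φ.bindDepth
  | .dia _ φ => φ.bindDepth
  | .bind _ φ => φ.bindDepth + 1

/-- Satisfaction of a sentence (empty assignment). -/
def GMLd.satS {p : ℕ} (G : LGraph p) (φ : GMLd p) (v : G.V) : Prop :=
  φ.sat G (fun _ => none) v

/-! ### Graded hybrid subgraph logic: the fragment GML(↓_W) -/

inductive GMLW (p : ℕ) : Type
  | prop (i : Fin p)
  | var (x : ℕ)
  | top
  | and (φ ψ : GMLW p)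
  | not (φ : GMLW p)
  | dia (k : ℕ) (φ : GMLW p)
  /-- `↓_{W^r} x. φ`, i.e. `↓x. W^r φ`. -/
  | bindW (x : ℕ) (r : ℕ) (φ : GMLW p)

/-- Restrict an assignment along passage to an induced subgraph: markings of
nodes outside the subgraph disappear. -/
noncomputable def restrictAssign {p : ℕ} {G : LGraph p} (S : Set G.V)
    (g : ℕ → Option G.V) : ℕ → Option (G.induce S).V :=
  fun x => (g x).bind (fun w => if h : w ∈ S then some ⟨w, h⟩ else none)

/-- Satisfaction for the fragment GML(↓_W): `↓x.W^r φ` marks the current node `v`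
with `x` and evaluates `φ` in the subgraph `G_v^r`. -/
noncomputable def GMLW.sat {p : ℕ} : GMLW p → (G : LGraph p) → (ℕ → Option G.V) → G.V → Prop
  | .prop i, G, _, v => G.lab v i
  | .var x, _, g, v => g x = some v
  | .top, _, _, _ => True
  | .and φ ψ, G, g, v => φ.sat G g v ∧ ψ.sat G g v
  | .not φ, G, g, v => ¬ φ.sat G g v
  | .dia k φ, G, g, v => k ≤ Nat.card {u : G.V // G.adj v u ∧ φ.sat G g u}
  | .bindW x r φ, G, g, v =>
      φ.sat (G.ball v r) (restrictAssign _ (Function.update g x (some v))) (G.ballCenter v r)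

def GMLW.free {p : ℕ} : GMLW p → Set ℕ
  | .prop _ => ∅
  | .var x => {x}
  | .top => ∅
  | .and φ ψ => φ.free ∪ ψ.free
  | .not φ => φ.free
  | .dia _ φ => φ.free
  | .bindW x _ φ => φ.free \ {x}

def GMLW.Sentence {p : ℕ} (φ : GMLW p) : Prop := φ.free = ∅

/-- The nesting depth of `↓_{W^r}` operators. -/
def GMLW.bindDepth {p : ℕ} : GMLW p → ℕ
  | .prop _ => 0
  | .var _ => 0
  | .top => 0
  | .and φ ψ => max φ.bindDepth ψ.bindDepth
  | .not φ => φ.bindDepth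
  | .dia _ φ => φ.bindDepth
  | .bindW _ _ φ => φ.bindDepth + 1

/-- All `↓_{W}` operators in the formula use radius `r`. -/
def GMLW.radIs {p : ℕ} (r : ℕ) : GMLW p → Prop
  | .prop _ => True
  | .var _ => True
  | .top => True
  | .and φ ψ => φ.radIs r ∧ ψ.radIs r
  | .not φ => φ.radIs r
  | .dia _ φ => φ.radIs r
  | .bindW _ r' φ => r' = r ∧ φ.radIs r

noncomputable def GMLW.satS {p : ℕ} (G : LGraph p) (φ : GMLW p) (v : G.V) : Prop :=
  φ.sat G (fun _ => none) v
/-! ### Weisfeiler–Leman and Individualization-Refinement -/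

/-- An (ordered) space of colors together with a perfect (injective) hash
function whose domains are: node labelings (initial colors), pairs of a color
and a multiset of colors (refinement), and pairs of a color and a marking
(individualization). -/
structure HashSetup (p : ℕ) : Type 1 where
  C : Type
  linC : LinearOrder C
  hInit : (Fin p → Prop) → C
  hRefine : C → Multiset C → C
  hIndiv : C → Prop → C
  inj : Function.Injective
    (Sum.elim hInit (Sum.elim (fun y : C × Multiset C => hRefine y.1 y.2)
      (fun y : C × Prop => hIndiv y.1 y.2)))

/-- A coloring is discrete if all color classes are singletons. -/
def Discrete {V C : Type} (col : V → C) : Prop :=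
  ∀ u w, col u = col w → u = w

/-- One round of color refinement. -/
noncomputable def wlStep {p : ℕ} (H : HashSetup p) (G : LGraph p)
    (col : G.V → H.C) : G.V → H.C :=
  fun v => H.hRefine (col v) ((G.nbrFinset v).val.map col)

/-- `wlIter H G d col` = `WL(G, col, d)`. -/
noncomputable def wlIter {p : ℕ} (H : HashSetup p) (G : LGraph p) :
    ℕ → (G.V → H.C) → (G.V → H.C)
  | 0, col => col
  | (d+1), col => wlStep H G (wlIter H G d col)

/-- The initial coloring `col_G`. -/
noncomputable def initCol {p : ℕ} (H : HashSetup p) (G : LGraph p) : G.V → H.C :=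
  fun v => H.hInit (G.lab v)

/-- Rose trees labeled by multisets of colors.  (Children are kept in a list;
the isomorphism relation below disregards their order.) -/
inductive CTree (C : Type) : Type
  | node (label : Multiset C) (children : List (CTree C))

/-- Isomorphism of trees whose nodes are labeled by multisets of colors. -/
inductive CTree.Iso {C : Type} : CTree C → CTree C → Prop
  | node {l : Multiset C} {cs1 cs2 : List (CTree C)}
      (e : Fin cs1.length ≃ Fin cs2.length)
      (h : ∀ i : Fin cs1.length, CTree.Iso (cs1.get i) (cs2.get (e i))) :
      CTree.Iso (.node l cs1) (.node l cs2)

/-- The multiset of all colors of a coloring. -/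
noncomputable def colMultiset {p : ℕ} (H : HashSetup p) (G : LGraph p)
    (col : G.V → H.C) : Multiset H.C :=
  Finset.univ.val.map col

/-- `WLIR H G d col` = the IR tree `WL-IR(G, col, d)` with at most `d`
individualization steps, with colorings recorded by their color multisets. -/
noncomputable def WLIR {p : ℕ} (H : HashSetup p) (G : LGraph p) :
    ℕ → (G.V → H.C) → CTree H.C
  | 0, col => .node (colMultiset H G (wlIter H G (Fintype.card G.V) col)) []
  | (d+1), col =>
    let col' := wlIter H G (Fintype.card G.V) col
    if hdisc : Discrete col' then .node (colMultiset H G col') []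
    else
      letI := H.linC
      let bigs : Finset H.C := (Finset.univ.image col').filter
        (fun c => 1 < (Finset.univ.filter (fun v => col' v = c)).card)
      have hne : bigs.Nonempty := by
        simp only [Discrete, not_forall] at hdisc
        obtain ⟨u, w, hc, hne'⟩ := hdisc
        refine ⟨col' u, Finset.mem_filter.mpr
          ⟨Finset.mem_image_of_mem _ (Finset.mem_univ u), ?_⟩⟩
        exact Finset.one_lt_card.mpr
          ⟨u, by simp, w, by simp [hc.symm], hne'⟩
      let c := bigs.min' hne
      .node (colMultiset H G col')
        (((Finset.univ.filter (fun v => col' v = c)).toList).map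
          (fun vi => WLIR H G d (fun v => H.hIndiv (col' v) (v = vi))))

/-- `G ≡_{WL-IR-d} G'` : the IR trees with `d` individualization steps are
isomorphic. -/
noncomputable def WLIRequiv {p : ℕ} (H : HashSetup p) (G G' : LGraph p) (d : ℕ) : Prop :=
  CTree.Iso (WLIR H G d (initCol H G)) (WLIR H G' d (initCol H G'))

/-- Isomorphism of labeled graphs. -/
def LGraph.Iso {p : ℕ} (G G' : LGraph p) : Prop :=
  ∃ f : G.V ≃ G'.V, (∀ u v, G.adj u v ↔ G'.adj (f u) (f v)) ∧
    ∀ v i, G.lab v i ↔ G'.lab (f v) i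
/-! ### The k-dimensional Weisfeiler–Leman test -/

/-- The type of `k`-WL colors after `i` refinement rounds (shared between all
graphs, so colors of different graphs are directly comparable). -/
def KColor (p k : ℕ) : ℕ → Type
  | 0 => ((Fin k → Fin k → Prop) × (Fin k → Fin k → Prop) × (Fin k → Fin p → Prop))
  | (i+1) => KColor p k i × (Fin k → Multiset (KColor p k i))

/-- The `k`-WL coloring of `k`-tuples after `i` rounds: the initial color is the
isomorphism type of the tuple (equalities, adjacencies, labels); each round
refines by, for each position, the multiset of colors of all one-point
modifications of the tuple. -/
noncomputable def kwl (p k : ℕ) (G : LGraph p) :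
    (i : ℕ) → (Fin k → G.V) → KColor p k i
  | 0, t => (fun i j => t i = t j, fun i j => G.adj (t i) (t j), fun i a => G.lab (t i) a)
  | (i+1), t => (kwl p k G i t,
      fun j => Finset.univ.val.map (fun w => kwl p k G i (Function.update t j w)))

/-- `(G,v)` and `(G',v')` are *not* distinguished by the `k`-dimensional WL test:
the colors of the constant tuples `(v,…,v)` and `(v',…,v')` agree at every round
(equivalently, the stable colors agree). -/
noncomputable def kwlEquiv (p k : ℕ) (G : LGraph p) (v : G.V) (G' : LGraph p) (v' : G'.V) : Prop :=
  ∀ i : ℕ, kwl p k G i (fun _ => v) = kwl p k G' i (fun _ => v')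
/-! ### Rooted graphs, homomorphism counts, Sum/ReLU-FFNN GNNs, degree bounds -/

namespace LGraph
variable {p : ℕ}

/-- `(F,u)` is a rooted graph: every node is reachable from `u`. -/
def Rooted (F : LGraph p) (u : F.V) : Prop := ∀ w, ∃ r, F.within u r w

/-- Every node of `G` has degree at most `N`. -/
def degLe (G : LGraph p) (N : ℕ) : Prop := ∀ v, Nat.card {u : G.V // G.adj v u} ≤ N

end LGraph

/-- The number of homomorphisms from the pointed graph `(F,u)` to `(G,v)`:
maps sending the root to `v`, preserving edges, and preserving labels. -/
noncomputable def homCount {p : ℕ} (F G : LGraph p) (u : F.V) (v : G.V) : ℕ :=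
  Nat.card {h : F.V → G.V //
    h u = v ∧ (∀ ⦃w w'⦄, F.adj w w' → G.adj (h w) (h w')) ∧
    ∀ w i, F.lab w i → G.lab (h w) i}

/-- Pointwise sum aggregation. -/
def sumAgg (D : ℕ) : Multiset (Fin D → ℝ) → (Fin D → ℝ) :=
  fun M i => (M.map (fun x => x i)).sum

/-- ReLU feed-forward neural networks: compositions of affine maps and
coordinatewise ReLU. -/
inductive IsReLUFFNN : {n m : ℕ} → ((Fin n → ℝ) → (Fin m → ℝ)) → Prop
  | affine {n m : ℕ} (W : Matrix (Fin m) (Fin n) ℝ) (b : Fin m → ℝ) :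
      IsReLUFFNN (fun x => W.mulVec x + b)
  | relu {n : ℕ} : IsReLUFFNN (fun (x : Fin n → ℝ) i => max 0 (x i))
  | comp {n m k : ℕ} {f : (Fin n → ℝ) → (Fin m → ℝ)} {g : (Fin m → ℝ) → (Fin k → ℝ)} :
      IsReLUFFNN f → IsReLUFFNN g → IsReLUFFNN (fun x => g (f x))

/-- A layer uses Sum aggregation and a ReLU-FFNN combination function. -/
def GNNLayer.SumReLU {Din Dout : ℕ} (l : GNNLayer Din Dout) : Prop :=
  l.agg = sumAgg Din ∧ IsReLUFFNN l.com

def GNN.SumReLU : {D D' : ℕ} → GNN D D' → Prop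
  | _, _, .last l => l.SumReLU
  | _, _, .cons l rest => l.SumReLU ∧ rest.SumReLU

def HEGNN.SumReLU : {d D D' : ℕ} → HEGNN d D D' → Prop
  | _, _, _, .base A => A.SumReLU
  | _, _, _, .nest B C => B.SumReLU ∧ C.SumReLU
/-! ### Cycles, acyclicity, ego-rank, tree-width -/

namespace LGraph
variable {p : ℕ}

/-- There is a cycle (length ≥ 3, distinct nodes, consecutive nodes adjacent,
cyclically) all of whose nodes lie in `S`. -/
def CycleIn (G : LGraph p) (S : Set G.V) : Prop :=
  ∃ (n : ℕ) (c : Fin n → G.V), 3 ≤ n ∧ Function.Injective c ∧ (∀ i, c i ∈ S) ∧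
    ∀ i : Fin n, G.adj (c i) (c ⟨(i.val + 1) % n, Nat.mod_lt _ i.pos⟩)

/-- `G` is acyclic. -/
def Acyclic (G : LGraph p) : Prop := ¬ G.CycleIn Set.univ

/-- `(G,v)` is c-acyclic: every cycle of `G` passes through `v`. -/
def CAcyclic (G : LGraph p) (v : G.V) : Prop :=
  ∀ (n : ℕ) (c : Fin n → G.V), 3 ≤ n → Function.Injective c →
    (∀ i : Fin n, G.adj (c i) (c ⟨(i.val + 1) % n, Nat.mod_lt _ i.pos⟩)) →
    ∃ i, c i = v

/-- Reachability inside a set `S` (paths are required to stay in `S`). -/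
inductive ReachIn (G : LGraph p) (S : Set G.V) : G.V → G.V → Prop
  | refl {a} (ha : a ∈ S) : ReachIn G S a a
  | tail {a b c} : ReachIn G S a b → G.adj b c → c ∈ S → ReachIn G S a c

/-- The set `S` induces a connected subgraph. -/
def ConnectedIn (G : LGraph p) (S : Set G.V) : Prop :=
  ∀ a ∈ S, ∀ b ∈ S, G.ReachIn S a b

/-- `G` is connected. -/
def Connected (G : LGraph p) : Prop := ∀ a b : G.V, ∃ r, G.within a r b

end LGraph

/-! #### Ego-rank -/

/-- Transitive closure of a partial map `dep` (so `DepCl dep w x` means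
`x ∈ deps(w) = {dep(w), dep(dep(w)), …} \ {⊥}`). -/
inductive DepCl {V : Type} (dep : V → Option V) : V → V → Prop
  | base {w x} : dep w = some x → DepCl dep w x
  | step {w x y} : DepCl dep w x → dep x = some y → DepCl dep w y

/-- `deps(w)` as a set. -/
def deps {V : Type} (dep : V → Option V) (w : V) : Set V := {x | DepCl dep w x}

/-- `dep` is a dependency function for the rooted graph `(G,v)`. -/
def IsDepFun {p : ℕ} (G : LGraph p) (v : G.V) (dep : G.V → Option G.V) : Prop :=
  dep v = none ∧
  (∀ {w u}, G.adj w u → dep w = dep u ∨ w ∈ deps dep u ∨ u ∈ deps dep w) ∧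
  (∀ o : Option G.V, ¬ G.CycleIn {w | dep w = o})

/-- The node rank of a node: `|deps(w)|`. -/
noncomputable def nodeRank {V : Type} (dep : V → Option V) (w : V) : ℕ :=
  Nat.card {x // DepCl dep w x}

/-- Ego-rank: the smallest achievable maximum node rank over all dependency
functions. -/
noncomputable def egoRank {p : ℕ} (G : LGraph p) (v : G.V) : ℕ :=
  sInf {k | ∃ dep, IsDepFun G v dep ∧ ∀ w, nodeRank dep w ≤ k}

/-! #### Tree decompositions and tree-width -/

/-- A tree decomposition of `G`: a (connected, acyclic) tree `T` with bags
covering all nodes and edges, such that each node's bags form a connected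
subtree. -/
structure TreeDecomp (p : ℕ) (G : LGraph p) : Type 1 where
  T : LGraph 0
  conn : T.Connected
  acyc : T.Acyclic
  bag : T.V → Set G.V
  cover_v : ∀ u : G.V, ∃ t, u ∈ bag t
  cover_e : ∀ {u w : G.V}, G.adj u w → ∃ t, u ∈ bag t ∧ w ∈ bag t
  subtree : ∀ u : G.V, T.ConnectedIn {t | u ∈ bag t}

/-- Tree-width: minimum over tree decompositions of (maximum bag size − 1). -/
noncomputable def treewidth {p : ℕ} (G : LGraph p) : ℕ :=
  sInf {w | ∃ D : TreeDecomp p G, ∀ t, Nat.card (D.bag t) ≤ w + 1}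
/-! ### Special graphs: cycles, disjoint unions, grids (all labels empty) -/

/-- The cycle graph `C_n` (for `n ≥ 3`), with empty node labels. -/
def cycleGraph (p n : ℕ) : LGraph p where
  V := Fin n
  fintypeV := inferInstance
  decEqV := inferInstance
  adj i j := i ≠ j ∧ ((i.val + 1) % n = j.val ∨ (j.val + 1) % n = i.val)
  symm h := ⟨h.1.symm, h.2.symm⟩
  irrefl _ h := h.1 rfl
  lab _ _ := False

/-- Disjoint union of two graphs. -/
def LGraph.disjUnion {p : ℕ} (G1 G2 : LGraph p) : LGraph p where
  V := G1.V ⊕ G2.V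
  fintypeV := inferInstance
  decEqV := inferInstance
  adj a b :=
    match a, b with
    | .inl x, .inl y => G1.adj x y
    | .inr x, .inr y => G2.adj x y
    | _, _ => False
  symm {a b} h := by
    cases a <;> cases b <;> simp_all <;> first | exact G1.symm h | exact G2.symm h
  irrefl a h := by
    cases a
    · exact G1.irrefl _ h
    · exact G2.irrefl _ h
  lab a i :=
    match a with
    | .inl x => G1.lab x i
    | .inr x => G2.lab x i

/-- The `n × 2` grid graph, with empty node labels. -/
def gridGraph (p n : ℕ) : LGraph p where
  V := Fin n × Fin 2
  fintypeV := inferInstance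
  decEqV := inferInstance
  adj a b := (a.2 = b.2 ∧ (a.1.val + 1 = b.1.val ∨ b.1.val + 1 = a.1.val)) ∨
    (a.1 = b.1 ∧ a.2 ≠ b.2)
  symm h := by
    rcases h with ⟨h1, h2⟩ | ⟨h1, h2⟩
    · exact Or.inl ⟨h1.symm, h2.symm⟩
    · exact Or.inr ⟨h1.symm, h2.symm⟩
  irrefl a h := by
    rcases h with ⟨_, h2 | h2⟩ | ⟨_, h2⟩
    · omega
    · omega
    · exact h2 rfl
  lab _ _ := False
/-! ### The witness graphs of Rattan–Seppelt: a central 4-cycle with attached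
triangles and 6-cycles. -/

/-- Vertex type: 4 square nodes, 4 triangles (3 nodes each), 4 hexagons
(6 nodes each). -/
abbrev RSV : Type := Fin 4 ⊕ (Fin 4 × Fin 3) ⊕ (Fin 4 × Fin 6)

/-- Adjacency, parameterized by the owner (square corner) of each triangle and
of each hexagon: the square is a 4-cycle; each triangle/hexagon is complete to
its owner; triangles are 3-cycles, hexagons are 6-cycles. -/
def rsAdj (tO hO : Fin 4 → Fin 4) : RSV → RSV → Prop
  | .inl a, .inl b => a ≠ b ∧ ((a.val + 1) % 4 = b.val ∨ (b.val + 1) % 4 = a.val)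
  | .inl a, .inr (.inl (t, _)) => a = tO t
  | .inr (.inl (t, _)), .inl a => a = tO t
  | .inl a, .inr (.inr (s, _)) => a = hO s
  | .inr (.inr (s, _)), .inl a => a = hO s
  | .inr (.inl (t, i)), .inr (.inl (t', i')) => t = t' ∧ i ≠ i'
  | .inr (.inr (s, j)), .inr (.inr (s', j')) =>
      s = s' ∧ ((j.val + 1) % 6 = j'.val ∨ (j'.val + 1) % 6 = j.val)
  | _, _ => False

def rsGraph (p : ℕ) (tO hO : Fin 4 → Fin 4) : LGraph p where
  V := RSV
  fintypeV := inferInstance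
  decEqV := inferInstance
  adj := rsAdj tO hO
  symm {u v} h := by
    rcases u with a | ⟨t, i⟩ | ⟨s, j⟩ <;> rcases v with b | ⟨t', i'⟩ | ⟨s', j'⟩ <;>
      simp only [rsAdj] at h ⊢ <;> tauto
  irrefl u h := by
    rcases u with a | ⟨t, i⟩ | ⟨s, j⟩ <;> simp only [rsAdj] at h <;> omega
  lab _ _ := False

/-- `G`: triangles attached to `u₁` (index 0) and `u₄` (index 3), hexagons to
`u₂` (index 1) and `u₃` (index 2). -/
def rsG (p : ℕ) : LGraph p :=
  rsGraph p (fun t => if t.val < 2 then 0 else 3) (fun s => if s.val < 2 then 1 else 2)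

/-- `G'`: triangles attached to the opposite corners `u₁` (index 0) and `u₃`
(index 2), hexagons to `u₂` (index 1) and `u₄` (index 3). -/
def rsG' (p : ℕ) : LGraph p :=
  rsGraph p (fun t => if t.val < 2 then 0 else 2) (fun s => if s.val < 2 then 1 else 3)
/-! ### Graph-level separation by node classifiers -/

/-- `G ≡_{GNN} G'`: for every GNN node classifier, the multisets of classifier
values over all nodes coincide. -/
noncomputable def gnnGraphEquiv (p : ℕ) (G G' : LGraph p) : Prop :=
  ∀ A : GNN p 1, Finset.univ.val.map (A.cls G) = Finset.univ.val.map (A.cls G')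

/-- `G ≡_{HE-GNN-(d)} G'`: for every HE-GNN node classifier of nesting depth
`d`, the multisets of classifier values over all nodes coincide. -/
noncomputable def hegnnGraphEquiv (p d : ℕ) (G G' : LGraph p) : Prop :=
  ∀ A : HEGNN d p 1, Finset.univ.val.map (A.cls G) = Finset.univ.val.map (A.cls G')

/-- The eccentricity of `u` in `G`: the maximal distance from `u` to any node. -/
noncomputable def LGraph.eccFrom {p : ℕ} (G : LGraph p) (u : G.V) : ℕ :=
  Finset.univ.sup (fun w => sInf {r | G.within u r w})


/-! ### Auxiliary lemmas for the proof -/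

section DepClAux

variable {V : Type} {f : V → Option V}

lemma DepCl.trans' {u b c : V} (h1 : DepCl f u b) (h2 : DepCl f b c) : DepCl f u c := by
  induction h2 with
  | base h => exact h1.step h
  | step _ h ih => exact ih.step h

lemma depCl_head {u x : V} (h : DepCl f u x) :
    ∃ y, f u = some y ∧ (y = x ∨ DepCl f y x) := by
  induction h with
  | base h => exact ⟨_, h, Or.inl rfl⟩
  | step _ h2 ih =>
    obtain ⟨z, hz, hc⟩ := ih
    rcases hc with rfl | hc
    · exact ⟨z, hz, Or.inr (DepCl.base h2)⟩
    · exact ⟨z, hz, Or.inr (hc.step h2)⟩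

lemma depCl_of_head {u y x : V} (hy : f u = some y) (h : y = x ∨ DepCl f y x) :
    DepCl f u x := by
  rcases h with rfl | h
  · exact DepCl.base hy
  · exact (DepCl.base hy).trans' h

lemma depCl_congr {a b x : V} (h : f a = f b) (hx : DepCl f a x) : DepCl f b x := by
  obtain ⟨y, hy, hc⟩ := depCl_head hx
  exact depCl_of_head (h.symm.trans hy) hc

lemma depCl_comp {a b c : V} (h1 : DepCl f a b) (h2 : DepCl f a c) :
    b = c ∨ DepCl f b c ∨ DepCl f c b := by
  induction h2 with
  | base h =>
    obtain ⟨y, hy, hc⟩ := depCl_head h1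
    rw [h] at hy
    injection hy with hy
    subst hy
    rcases hc with rfl | hc
    · exact Or.inl rfl
    · exact Or.inr (Or.inr hc)
  | step h2' h ih =>
    rcases ih with rfl | hbx | hxb
    · exact Or.inr (Or.inl (DepCl.base h))
    · exact Or.inr (Or.inl (hbx.step h))
    · obtain ⟨z, hz, hc⟩ := depCl_head hxb
      rw [h] at hz
      injection hz with hz
      subst hz
      rcases hc with rfl | hc
      · exact Or.inl rfl
      · exact Or.inr (Or.inr hc)

lemma depCl_cyc {y x : V} (hy : DepCl f y y) (h : DepCl f y x) : DepCl f x y := by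
  induction h with
  | base h =>
    obtain ⟨z, hz, hc⟩ := depCl_head hy
    rw [h] at hz
    injection hz with hz
    subst hz
    rcases hc with rfl | hc
    · exact hy
    · exact hc
  | step h1 h2 ih =>
    have hxx : DepCl f _ _ := ih.trans' h1
    obtain ⟨z, hz, hc⟩ := depCl_head hxx
    rw [h2] at hz
    injection hz with hz
    subst hz
    rcases hc with rfl | hc
    · exact ih
    · exact hc.trans' ih

lemma depCl_self_step {b : V} (hb : DepCl f b b) :
    ∃ z, f b = some z ∧ DepCl f z z := by
  obtain ⟨z, hz, hc⟩ := depCl_head hb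
  rcases hc with rfl | hc
  · exact ⟨z, hz, hb⟩
  · exact ⟨z, hz, hc.trans' (DepCl.base hz)⟩

lemma no_depCl_of_lex {g h : V → ℕ}
    (hdec : ∀ a b, f a = some b → g b < g a ∨ (g b = g a ∧ h b < h a)) :
    ∀ u, ¬ DepCl f u u := by
  have key : ∀ u x, DepCl f u x → g x < g u ∨ (g x = g u ∧ h x < h u) := by
    intro u x hx
    induction hx with
    | base hb => exact hdec _ _ hb
    | step _ h2 ih =>
      rcases ih with ih | ⟨ih1, ih2⟩ <;> rcases hdec _ _ h2 with hh | ⟨hh1, hh2⟩ <;> omega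
  intro u hu
  rcases key u u hu with h | ⟨h1, h2⟩ <;> omega

lemma nodeRank_eq_ncard (w : V) : nodeRank f w = ({x | DepCl f w x} : Set V).ncard := by
  rw [← Nat.card_coe_set_eq]
  rfl

lemma nodeRank_insert [Finite V] {a y : V} (ha : f a = some y) (hy : ¬ DepCl f y y) :
    nodeRank f a = nodeRank f y + 1 := by
  have hset : {x | DepCl f a x} = insert y {x | DepCl f y x} := by
    ext x
    simp only [Set.mem_setOf_eq, Set.mem_insert_iff]
    constructor
    · intro hx
      obtain ⟨z, hz, hc⟩ := depCl_head hx
      rw [ha] at hz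
      injection hz with hz
      subst hz
      rcases hc with rfl | hc
      · exact Or.inl rfl
      · exact Or.inr hc
    · intro hx
      rcases hx with rfl | hx
      · exact DepCl.base ha
      · exact (DepCl.base ha).trans' hx
  rw [nodeRank_eq_ncard, nodeRank_eq_ncard, hset]
  exact Set.ncard_insert_of_notMem hy (Set.toFinite _)

lemma nodeRank_congr' {a b : V} (h : f a = f b) : nodeRank f a = nodeRank f b := by
  rw [nodeRank_eq_ncard, nodeRank_eq_ncard]
  congr 1
  exact Set.ext fun x => ⟨depCl_congr h, depCl_congr h.symm⟩

lemma nodeRank_le_card [Fintype V] (w : V) : nodeRank f w ≤ Fintype.card V := by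
  have h : Nat.card {x // DepCl f w x} ≤ Nat.card V :=
    Nat.card_le_card_of_injective _ Subtype.val_injective
  exact h.trans_eq Nat.card_eq_fintype_card

lemma nodeRank_pos [Finite V] {a y : V} (ha : f a = some y) : 0 < nodeRank f a := by
  haveI : Nonempty {x // DepCl f a x} := ⟨⟨y, DepCl.base ha⟩⟩
  exact Nat.card_pos

end DepClAux

namespace LGraph

variable {p : ℕ} {H : LGraph p}

lemma within_zero_iff {a b : H.V} : H.within a 0 b ↔ b = a := Iff.rfl

lemma within_succ_iff {a b : H.V} {r : ℕ} :
    H.within a (r+1) b ↔ (H.within a r b ∨ ∃ w, H.within a r w ∧ H.adj w b) := Iff.rfl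

lemma within_succ_of {a b : H.V} {r : ℕ} (h : H.within a r b) : H.within a (r+1) b :=
  Or.inl h

lemma within_one_of_adj {a b : H.V} (h : H.adj a b) : H.within a 1 b :=
  Or.inr ⟨a, rfl, h⟩

lemma within_concat {a b c : H.V} {r s : ℕ} (h1 : H.within a r b) (h2 : H.within b s c) :
    H.within a (r + s) c := by
  induction s generalizing c with
  | zero =>
    have hcb : c = b := h2
    subst hcb
    exact h1
  | succ s ih =>
    rcases h2 with h2 | ⟨w, hw, hadj⟩
    · exact within_succ_of (ih h2)
    · exact Or.inr ⟨w, ih hw, hadj⟩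

lemma within_symm {a b : H.V} {r : ℕ} (h : H.within a r b) : H.within b r a := by
  induction r generalizing b with
  | zero =>
    have hba : b = a := h
    subst hba
    rfl
  | succ r ih =>
    rcases h with h | ⟨w, hw, hadj⟩
    · exact Or.inl (ih h)
    · have h3 := within_concat (within_one_of_adj (H.symm hadj)) (ih hw)
      rw [Nat.add_comm] at h3
      exact h3

lemma ReachIn.mem_right {S : Set H.V} {a b : H.V} (h : H.ReachIn S a b) : b ∈ S := by
  induction h with
  | refl ha => exact ha
  | tail _ _ hc _ => exact hc

lemma ReachIn.mem_left {S : Set H.V} {a b : H.V} (h : H.ReachIn S a b) : a ∈ S := by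
  induction h with
  | refl ha => exact ha
  | tail _ _ _ ih => exact ih

lemma ReachIn.trans'' {S : Set H.V} {a b c : H.V} (h1 : H.ReachIn S a b)
    (h2 : H.ReachIn S b c) : H.ReachIn S a c := by
  induction h2 with
  | refl _ => exact h1
  | tail _ hadj hc ih => exact ih.tail hadj hc

lemma ReachIn.symm' {S : Set H.V} {a b : H.V} (h : H.ReachIn S a b) : H.ReachIn S b a := by
  induction h with
  | refl ha => exact ReachIn.refl ha
  | tail hab hadj hc ih =>
    exact ((ReachIn.refl hc).tail (H.symm hadj) hab.mem_right).trans'' ih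

/-- Reachability in at most `r` steps inside `S`, starting from `a`. -/
def winS (H : LGraph p) (S : Set H.V) (a : H.V) : ℕ → H.V → Prop
  | 0 => fun u => u = a
  | (r+1) => fun u => winS H S a r u ∨ ∃ w, winS H S a r w ∧ H.adj w u ∧ u ∈ S

lemma winS_mem {S : Set H.V} {a : H.V} (ha : a ∈ S) :
    ∀ r u, H.winS S a r u → u ∈ S := by
  intro r
  induction r with
  | zero =>
    intro u h
    exact (show u = a from h) ▸ ha
  | succ r ih =>
    intro u h
    rcases h with h | ⟨w, _, _, hu⟩
    · exact ih u h
    · exact hu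

lemma winS_succ_of {S : Set H.V} {a u : H.V} {r : ℕ} (h : H.winS S a r u) :
    H.winS S a (r+1) u := Or.inl h

lemma winS_step {S : Set H.V} {a w u : H.V} {r : ℕ} (h1 : H.winS S a r w)
    (h2 : H.adj w u) (h3 : u ∈ S) : H.winS S a (r+1) u := Or.inr ⟨w, h1, h2, h3⟩

lemma reachIn_of_winS {S : Set H.V} {a : H.V} (ha : a ∈ S) :
    ∀ r u, H.winS S a r u → H.ReachIn S a u := by
  intro r
  induction r with
  | zero =>
    intro u h
    have hu : u = a := h
    subst hu
    exact LGraph.ReachIn.refl ha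
  | succ r ih =>
    intro u h
    rcases h with h | ⟨w, hw, hadj, hu⟩
    · exact ih u h
    · exact (ih w hw).tail hadj hu

lemma winS_of_reachIn {S : Set H.V} {a b : H.V} (h : H.ReachIn S a b) :
    ∃ r, H.winS S a r b := by
  induction h with
  | refl _ => exact ⟨0, rfl⟩
  | tail _ hadj hc ih =>
    obtain ⟨r, hr⟩ := ih
    exact ⟨r+1, Or.inr ⟨_, hr, hadj, hc⟩⟩

end LGraph

section EasyParts

variable {p : ℕ} (G : LGraph p) (v : G.V)

lemma cycleIn_subsingleton {S : Set G.V} (hS : ∀ a ∈ S, ∀ b ∈ S, a = b) :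
    ¬ G.CycleIn S := by
  rintro ⟨n, c, hn, hinj, hmem, -⟩
  have h01 : (⟨0, by omega⟩ : Fin n) ≠ ⟨1, by omega⟩ := by
    simp [Fin.ext_iff]
  exact h01 (hinj (hS _ (hmem _) _ (hmem _)))

lemma exists_depfun :
    ∃ dep, IsDepFun G v dep ∧ ∀ w, nodeRank dep w ≤ Fintype.card G.V := by
  classical
  haveI : Nonempty G.V := ⟨v⟩
  set n := Fintype.card G.V with hn
  have hnpos : 0 < n := Fintype.card_pos
  set f : G.V ≃ Fin n := (Fintype.equivFin G.V).trans
    (Equiv.swap ((Fintype.equivFin G.V) v) ⟨0, hnpos⟩) with hf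
  have hfv : f v = ⟨0, hnpos⟩ := by
    simp [hf, Equiv.swap_apply_left]
  have hsub : ∀ u : G.V, (f u).val - 1 < n :=
    fun u => lt_of_le_of_lt (Nat.sub_le _ _) (f u).isLt
  set dep : G.V → Option G.V :=
    fun u => if (f u).val = 0 then none else some (f.symm ⟨(f u).val - 1, hsub u⟩)
    with hdepdef
  have hnone : ∀ u, dep u = none → u = v := by
    intro u h
    simp only [hdepdef] at h
    by_cases h0 : (f u).val = 0
    · apply f.injective
      rw [hfv]
      exact Fin.ext h0
    · rw [if_neg h0] at h
      exact absurd h (by simp)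
  have hdv : dep v = none := by
    simp only [hdepdef]
    rw [if_pos]
    rw [hfv]
  have hsome : ∀ u, (f u).val ≠ 0 →
      dep u = some (f.symm ⟨(f u).val - 1, hsub u⟩) := by
    intro u h0
    simp only [hdepdef]
    rw [if_neg h0]
  have hval : ∀ u w, dep u = some w → (f w).val + 1 = (f u).val := by
    intro u w h
    simp only [hdepdef] at h
    by_cases h0 : (f u).val = 0
    · rw [if_pos h0] at h
      exact absurd h (by simp)
    · rw [if_neg h0] at h
      injection h with h
      rw [← h]
      simp
      omega
  have key : ∀ m w x, (f w).val = m → (f x).val < (f w).val → DepCl dep w x := by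
    intro m
    induction m using Nat.strong_induction_on with
    | _ m ih =>
      intro w x hm hlt
      have h0 : (f w).val ≠ 0 := by omega
      have hw := hsome w h0
      by_cases hx : (f x).val = (f w).val - 1
      · have hxx : x = f.symm ⟨(f w).val - 1, hsub w⟩ := by
          apply f.injective
          simp [Fin.ext_iff, hx]
        rw [hxx]
        exact DepCl.base hw
      · have hw' : (f (f.symm ⟨(f w).val - 1, hsub w⟩)).val = (f w).val - 1 := by simp
        exact (DepCl.base hw).trans'
          (ih ((f w).val - 1) (by omega) _ x hw' (by omega))
  refine ⟨dep, ⟨hdv, ?_, ?_⟩, fun w => nodeRank_le_card w⟩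
  · intro w u hadj
    have hne : w ≠ u := fun h => G.irrefl u (h ▸ hadj)
    have hfne : (f w).val ≠ (f u).val := fun h => hne (f.injective (Fin.ext h))
    rcases Nat.lt_or_ge (f w).val (f u).val with h | h
    · exact Or.inr (Or.inl (key _ u w rfl h))
    · exact Or.inr (Or.inr (key _ w u rfl (by omega)))
  · intro o
    apply cycleIn_subsingleton
    intro a ha b hb
    simp only [Set.mem_setOf_eq] at ha hb
    cases o with
    | none => rw [hnone a ha, hnone b hb]
    | some x =>
      have h1 := hval a x ha
      have h2 := hval b x hb
      apply f.injective
      apply Fin.ext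
      omega

lemma egoRank_set_nonempty :
    {k | ∃ dep, IsDepFun G v dep ∧ ∀ w, nodeRank dep w ≤ k}.Nonempty := by
  obtain ⟨dep, h1, h2⟩ := exists_depfun G v
  exact ⟨Fintype.card G.V, dep, h1, h2⟩

lemma egoRank_le_card : egoRank G v ≤ Fintype.card G.V := by
  obtain ⟨dep, h1, h2⟩ := exists_depfun G v
  exact Nat.sInf_le ⟨dep, h1, h2⟩

lemma egoRank_zero_iff : egoRank G v = 0 ↔ G.Acyclic := by
  constructor
  · intro h
    have hne := egoRank_set_nonempty G v
    have h0 : 0 ∈ {k | ∃ dep, IsDepFun G v dep ∧ ∀ w, nodeRank dep w ≤ k} := by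
      rcases Nat.sInf_eq_zero.mp h with h' | h'
      · exact h'
      · rw [h'] at hne
        exact absurd hne Set.not_nonempty_empty
    obtain ⟨dep, hdep, hr⟩ := h0
    have hall : ∀ w, dep w = none := by
      intro w
      cases hw : dep w with
      | none => rfl
      | some y =>
        have h1 := nodeRank_pos (f := dep) hw
        have h2 := hr w
        omega
    have hset : {w : G.V | dep w = none} = Set.univ :=
      Set.ext fun w => by simp [hall w]
    have h3 := hdep.2.2 none
    rw [hset] at h3
    exact h3
  · intro h
    apply Nat.sInf_eq_zero.mpr
    left
    refine ⟨fun _ => none, ⟨rfl, fun {w u} _ => Or.inl rfl, ?_⟩, ?_⟩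
    · intro o
      cases o with
      | none =>
        have hset : {w : G.V | (none : Option G.V) = none} = Set.univ := by
          ext w; simp
        intro hcyc
        rw [hset] at hcyc
        exact h hcyc
      | some x =>
        rintro ⟨n, c, hn, -, hmem, -⟩
        have := hmem ⟨0, by omega⟩
        simp only [Set.mem_setOf_eq] at this
        simp at this
    · intro w
      haveI : IsEmpty {x // DepCl (fun _ => (none : Option G.V)) w x} := by
        constructor
        rintro ⟨x, hx⟩
        obtain ⟨y, hy, -⟩ := depCl_head hx
        simp at hy
      simp [nodeRank, Nat.card_of_isEmpty]

lemma egoRank_le_one (hc : G.CAcyclic v) : egoRank G v ≤ 1 := by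
  classical
  apply Nat.sInf_le
  have hvalv : ∀ a b : G.V, (if a = v then none else some v) = some b → b = v := by
    intro a b h
    by_cases ha : a = v
    · rw [if_pos ha] at h
      simp at h
    · rw [if_neg ha] at h
      injection h with h
      exact h.symm
  refine ⟨fun u => if u = v then none else some v, ⟨by simp, ?_, ?_⟩, ?_⟩
  · intro w u hadj
    by_cases hw : w = v
    · have hu : u ≠ v := fun h => G.irrefl v (by rw [hw, h] at hadj; exact hadj)
      exact Or.inr (Or.inl (DepCl.base (by rw [if_neg hu, hw])))
    · by_cases hu : u = v
      · exact Or.inr (Or.inr (DepCl.base (by rw [if_neg hw, hu])))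
      · exact Or.inl (show (if w = v then (none : Option G.V) else some v) =
          (if u = v then none else some v) by rw [if_neg hw, if_neg hu])
  · intro o
    rintro ⟨n, c, hn, hinj, hmem, hadj⟩
    cases o with
    | none =>
      have hv : ∀ i, c i = v := by
        intro i
        have hi := hmem i
        simp only [Set.mem_setOf_eq] at hi
        by_cases h : c i = v
        · exact h
        · rw [if_neg h] at hi
          simp at hi
      have h01 : (⟨0, by omega⟩ : Fin n) = ⟨1, by omega⟩ :=
        hinj ((hv _).trans (hv _).symm)
      simp [Fin.ext_iff] at h01
    | some x =>
      obtain ⟨i, hi⟩ := hc n c hn hinj hadj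
      have hmi := hmem i
      simp only [Set.mem_setOf_eq, hi, if_pos rfl] at hmi
      simp at hmi
  · intro w
    have hsub : {x : G.V | DepCl (fun u => if u = v then none else some v) w x} ⊆ {v} := by
      intro x hx
      simp only [Set.mem_setOf_eq] at hx
      induction hx with
      | base h => exact hvalv _ _ h
      | step _ h _ => exact hvalv _ _ h
    rw [nodeRank_eq_ncard]
    calc ({x : G.V | DepCl (fun u => if u = v then none else some v) w x}).ncard
        ≤ ({v} : Set G.V).ncard := Set.ncard_le_ncard hsub (Set.toFinite _)
      _ = 1 := Set.ncard_singleton v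

end EasyParts

section TreewidthPart

variable {p : ℕ} (G : LGraph p) (v : G.V) (dep : G.V → Option G.V)

/-- The dep-class of a node. -/
def cls (u : G.V) : Set G.V := {w | dep w = dep u}

lemma mem_cls_self (u : G.V) : u ∈ cls G dep u := rfl

/-- The connected component of `u` inside its class. -/
def Kcomp (u : G.V) : Set G.V := {w | G.ReachIn (cls G dep u) u w}

lemma mem_Kcomp_self (u : G.V) : u ∈ Kcomp G dep u := LGraph.ReachIn.refl rfl

lemma mem_cls_of_Kcomp {u w : G.V} (h : w ∈ Kcomp G dep u) : dep w = dep u :=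
  LGraph.ReachIn.mem_right h

lemma cls_congr {u w : G.V} (h : dep w = dep u) : cls G dep w = cls G dep u := by
  ext z
  simp only [cls, Set.mem_setOf_eq, h]

lemma Kcomp_congr {u w : G.V} (h : w ∈ Kcomp G dep u) :
    Kcomp G dep w = Kcomp G dep u := by
  have hcl : cls G dep w = cls G dep u := cls_congr G dep (mem_cls_of_Kcomp G dep h)
  ext z
  simp only [Kcomp, Set.mem_setOf_eq, hcl]
  constructor
  · intro hz
    exact LGraph.ReachIn.trans'' h hz
  · intro hz
    exact LGraph.ReachIn.trans'' (LGraph.ReachIn.symm' h) hz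

lemma prop_to_root (hroot : G.Rooted v) (P : G.V → Prop)
    (hprop : ∀ a b, G.adj a b → P b → P a) {u : G.V} (hu : P u) : P v := by
  obtain ⟨r, hr⟩ := hroot u
  have key : ∀ r u, G.within v r u → P u → P v := by
    intro r
    induction r with
    | zero =>
      intro u h hp
      have huv : u = v := h
      exact huv ▸ hp
    | succ r ih =>
      intro u h hp
      rcases h with h | ⟨w, hw, hadj⟩
      · exact ih u h hp
      · exact ih w hw (hprop w u hadj hp)
  exact key r u hr hu

lemma no_depCl_self (hroot : G.Rooted v) (hdep : IsDepFun G v dep) :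
    ∀ u, ¬ DepCl dep u u := by
  intro u hu
  set P : G.V → Prop := fun z => DepCl dep z z ∨ ∃ w, DepCl dep w w ∧ DepCl dep z w
    with hP
  have hprop : ∀ a b, G.adj a b → P b → P a := by
    intro a b hadj hb
    rcases hdep.2.1 hadj with heq | hba | hab
    · rcases hb with hbb | ⟨w, hww, hbw⟩
      · obtain ⟨z, hz, hzz⟩ := depCl_self_step hbb
        exact Or.inr ⟨z, hzz, DepCl.base (heq.trans hz)⟩
      · obtain ⟨z, hz, hc⟩ := depCl_head hbw
        exact Or.inr ⟨w, hww, depCl_of_head (heq.trans hz) hc⟩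
    · rcases hb with hbb | ⟨w, hww, hbw⟩
      · exact Or.inr ⟨b, hbb, depCl_cyc hbb hba⟩
      · rcases depCl_comp hba hbw with rfl | haw | hwa
        · exact Or.inl hww
        · exact Or.inr ⟨w, hww, haw⟩
        · exact Or.inr ⟨w, hww, depCl_cyc hww hwa⟩
    · rcases hb with hbb | ⟨w, hww, hbw⟩
      · exact Or.inr ⟨b, hbb, hab⟩
      · exact Or.inr ⟨w, hww, hab.trans' hbw⟩
  have hv := prop_to_root G v hroot P hprop (Or.inl hu)
  rcases hv with hvv | ⟨w, -, hvw⟩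
  · obtain ⟨y, hy, -⟩ := depCl_head hvv
    rw [hdep.1] at hy
    simp at hy
  · obtain ⟨y, hy, -⟩ := depCl_head hvw
    rw [hdep.1] at hy
    simp at hy

lemma root_mem_Kcomp_none (hroot : G.Rooted v) (hdep : IsDepFun G v dep)
    {u : G.V} (hu : dep u = none) : v ∈ Kcomp G dep u := by
  set P : G.V → Prop :=
    fun z => z ∈ Kcomp G dep u ∨ ∃ w, w ∈ Kcomp G dep u ∧ DepCl dep z w with hP
  have hmemnone : ∀ z, z ∈ Kcomp G dep u → dep z = none := fun z hz =>
    (mem_cls_of_Kcomp G dep hz).trans hu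
  have hprop : ∀ a b, G.adj a b → P b → P a := by
    intro a b hadj hb
    rcases hdep.2.1 hadj with heq | hba | hab
    · rcases hb with hbK | ⟨w, hwK, hbw⟩
      · left
        exact LGraph.ReachIn.tail hbK (G.symm hadj)
          (show dep a = dep u from heq.trans (mem_cls_of_Kcomp G dep hbK))
      · obtain ⟨z, hz, hc⟩ := depCl_head hbw
        exact Or.inr ⟨w, hwK, depCl_of_head (heq.trans hz) hc⟩
    · rcases hb with hbK | ⟨w, hwK, hbw⟩
      · obtain ⟨y, hy, -⟩ := depCl_head hba
        rw [hmemnone b hbK] at hy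
        simp at hy
      · rcases depCl_comp hba hbw with rfl | haw | hwa
        · exact Or.inl hwK
        · exact Or.inr ⟨w, hwK, haw⟩
        · obtain ⟨y, hy, -⟩ := depCl_head hwa
          rw [hmemnone w hwK] at hy
          simp at hy
    · rcases hb with hbK | ⟨w, hwK, hbw⟩
      · exact Or.inr ⟨b, hbK, hab⟩
      · exact Or.inr ⟨w, hwK, hab.trans' hbw⟩
  have hv := prop_to_root G v hroot P hprop (Or.inl (mem_Kcomp_self G dep u))
  rcases hv with h | ⟨w, -, hvw⟩
  · exact h
  · obtain ⟨y, hy, -⟩ := depCl_head hvw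
    rw [hdep.1] at hy
    simp at hy

lemma exists_choose_congr {α : Type} {P Q : α → Prop} (h : ∀ x, P x = Q x)
    (hp : ∃ x, P x) (hq : ∃ x, Q x) : hp.choose = hq.choose := by
  have hPQ : P = Q := funext h
  subst hPQ
  rfl

/-- The chosen root of the class-component of `u`. -/
noncomputable def rt (u : G.V) : G.V :=
  if dep u = none then v
  else (⟨u, mem_Kcomp_self G dep u⟩ : ∃ z, z ∈ Kcomp G dep u).choose

lemma rt_mem (hroot : G.Rooted v) (hdep : IsDepFun G v dep) (u : G.V) :
    rt G v dep u ∈ Kcomp G dep u := by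
  unfold rt
  by_cases h : dep u = none
  · rw [if_pos h]
    exact root_mem_Kcomp_none G v dep hroot hdep h
  · rw [if_neg h]
    exact (⟨u, mem_Kcomp_self G dep u⟩ : ∃ z, z ∈ Kcomp G dep u).choose_spec

lemma rt_congr {u w : G.V} (h : w ∈ Kcomp G dep u) :
    rt G v dep w = rt G v dep u := by
  have hd : dep w = dep u := mem_cls_of_Kcomp G dep h
  have hK : Kcomp G dep w = Kcomp G dep u := Kcomp_congr G dep h
  unfold rt
  rw [hd]
  by_cases h0 : dep u = none
  · rw [if_pos h0, if_pos h0]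
  · rw [if_neg h0, if_neg h0]
    exact exists_choose_congr (fun z => by rw [hK]) _ _

/-- Distance of `u` from the root of its class-component, inside its class. -/
noncomputable def dKn (u : G.V) : ℕ :=
  sInf {r | G.winS (cls G dep u) (rt G v dep u) r u}

lemma dKn_eq_frame {u w : G.V} (h : w ∈ Kcomp G dep u) :
    dKn G v dep w = sInf {r | G.winS (cls G dep u) (rt G v dep u) r w} := by
  unfold dKn
  rw [cls_congr G dep (mem_cls_of_Kcomp G dep h), rt_congr G v dep h]

lemma cycleIn_of_paths {S : Set G.V} (P Q : ℕ → G.V) (m m' : ℕ)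
    (hm : 1 ≤ m) (hm' : 1 ≤ m')
    (hPS : ∀ i ≤ m, P i ∈ S) (hQS : ∀ j ≤ m', Q j ∈ S)
    (hPadj : ∀ i < m, G.adj (P i) (P (i+1)))
    (hQadj : ∀ j < m', G.adj (Q j) (Q (j+1)))
    (h0 : P 0 = Q 0)
    (htop : G.adj (P m) (Q m'))
    (hPinj : ∀ i ≤ m, ∀ i' ≤ m, P i = P i' → i = i')
    (hQinj : ∀ j ≤ m', ∀ j' ≤ m', Q j = Q j' → j = j')
    (hcross : ∀ i ≤ m, ∀ j ≤ m', P i = Q j → i = 0 ∧ j = 0) :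
    G.CycleIn S := by
  classical
  set n := m + m' + 1 with hn
  set F : ℕ → G.V := fun t => if t ≤ m then P t else Q (n - t) with hF
  refine ⟨n, fun i => F i.val, by omega, ?_, ?_, ?_⟩
  · intro i j hij
    simp only [hF] at hij
    have hi := i.isLt
    have hj := j.isLt
    apply Fin.ext
    by_cases h1 : i.val ≤ m <;> by_cases h2 : j.val ≤ m
    · rw [if_pos h1, if_pos h2] at hij
      exact hPinj _ h1 _ h2 hij
    · rw [if_pos h1, if_neg h2] at hij
      have := hcross _ h1 (n - j.val) (by omega) hij
      omega
    · rw [if_neg h1, if_pos h2] at hij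
      have := hcross _ h2 (n - i.val) (by omega) hij.symm
      omega
    · rw [if_neg h1, if_neg h2] at hij
      have := hQinj _ (by omega) _ (by omega) hij
      omega
  · intro i
    have hi := i.isLt
    simp only [hF]
    by_cases h1 : i.val ≤ m
    · rw [if_pos h1]
      exact hPS _ h1
    · rw [if_neg h1]
      exact hQS _ (by omega)
  · intro i
    have hi := i.isLt
    show G.adj (F i.val) (F ((i.val + 1) % n))
    by_cases hlast : i.val = n - 1
    · have hmod : (i.val + 1) % n = 0 := by
        have h1 : i.val + 1 = n := by omega
        rw [h1, Nat.mod_self]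
      rw [hmod, hlast]
      have hF0 : F 0 = Q 0 := by
        rw [hF]
        simp only [if_pos (Nat.zero_le m)]
        exact h0
      have hFn1 : F (n - 1) = Q 1 := by
        rw [hF]
        simp only
        rw [if_neg (by omega)]
        congr 1
        omega
      rw [hF0, hFn1]
      exact G.symm (hQadj 0 hm')
    · have hmod : (i.val + 1) % n = i.val + 1 := Nat.mod_eq_of_lt (by omega)
      rw [hmod]
      rcases Nat.lt_trichotomy i.val m with hc | hc | hc
      · rw [hF]
        simp only
        rw [if_pos (by omega), if_pos (by omega)]
        exact hPadj _ hc
      · rw [hF]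
        simp only
        rw [if_pos (by omega), if_neg (by omega)]
        have : n - (i.val + 1) = m' := by omega
        rw [this, hc]
        exact htop
      · rw [hF]
        simp only
        rw [if_neg (by omega), if_neg (by omega)]
        have h4 : n - i.val = (n - (i.val + 1)) + 1 := by omega
        rw [h4]
        exact G.symm (hQadj _ (by omega))

lemma exists_minpath {S : Set G.V} {a : G.V} (ha : a ∈ S) (dd : G.V → ℕ)
    (hdd : ∀ x, dd x = sInf {r | G.winS S a r x}) (u : G.V)
    (hu : ∃ r, G.winS S a r u) :
    ∃ P : ℕ → G.V, P 0 = a ∧ P (dd u) = u ∧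
      (∀ i < dd u, G.adj (P i) (P (i+1))) ∧
      (∀ i ≤ dd u, P i ∈ S ∧ dd (P i) = i) := by
  have hdda : dd a = 0 := by
    rw [hdd]
    exact Nat.sInf_eq_zero.mpr (Or.inl rfl)
  suffices h : ∀ d u, dd u = d → (∃ r, G.winS S a r u) →
      ∃ P : ℕ → G.V, P 0 = a ∧ P (dd u) = u ∧
        (∀ i < dd u, G.adj (P i) (P (i+1))) ∧
        (∀ i ≤ dd u, P i ∈ S ∧ dd (P i) = i) from h (dd u) u rfl hu
  intro d
  induction d using Nat.strong_induction_on with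
  | _ d ih =>
    intro u hdu hu
    have hmem : G.winS S a (dd u) u := by
      rw [hdd]
      exact Nat.sInf_mem hu
    cases d with
    | zero =>
      rw [hdu] at hmem
      have hu0 : u = a := hmem
      refine ⟨fun _ => a, rfl, ?_, ?_, ?_⟩
      · rw [hdu]
        exact hu0.symm
      · intro i hi
        rw [hdu] at hi
        omega
      · intro i hi
        rw [hdu] at hi
        have : i = 0 := by omega
        exact ⟨ha, by rw [hdda, this]⟩
    | succ e =>
      rw [hdu] at hmem
      rcases hmem with hmem | ⟨w, hw, hadj, huS⟩
      · exfalso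
        have : dd u ≤ e := by
          rw [hdd]
          exact Nat.sInf_le hmem
        omega
      · have hdw_le : dd w ≤ e := by
          rw [hdd]
          exact Nat.sInf_le hw
        have hdw_ge : e ≤ dd w := by
          by_contra hlt
          push_neg at hlt
          have hww : G.winS S a (dd w) w := by
            rw [hdd]
            exact Nat.sInf_mem (⟨e, hw⟩ : {r | G.winS S a r w}.Nonempty)
          have hst : G.winS S a (dd w + 1) u := LGraph.winS_step hww hadj huS
          have h5 : dd u ≤ dd w + 1 := by
            rw [hdd]
            exact Nat.sInf_le hst
          omega
        have hdw : dd w = e := le_antisymm hdw_le hdw_ge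
        obtain ⟨P', hP0, hPe, hPadj, hPlab⟩ := ih e (by omega) w hdw ⟨e, hw⟩
        rw [hdw] at hPe hPadj hPlab
        refine ⟨fun i => if i ≤ e then P' i else u, ?_, ?_, ?_, ?_⟩
        · show (if 0 ≤ e then P' 0 else u) = a
          rw [if_pos (Nat.zero_le e)]
          exact hP0
        · rw [hdu]
          show (if e + 1 ≤ e then P' (e+1) else u) = u
          rw [if_neg (by omega)]
        · intro i hi
          rw [hdu] at hi
          show G.adj (if i ≤ e then P' i else u) (if i + 1 ≤ e then P' (i+1) else u)
          by_cases hie : i + 1 ≤ e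
          · rw [if_pos (by omega), if_pos hie]
            exact hPadj i (by omega)
          · have hieq : i = e := by omega
            rw [if_pos (by omega), if_neg (by omega), hieq, hPe]
            exact hadj
        · intro i hi
          rw [hdu] at hi
          show (if i ≤ e then P' i else u) ∈ S ∧ dd (if i ≤ e then P' i else u) = i
          by_cases hie : i ≤ e
          · rw [if_pos hie]
            exact hPlab i hie
          · have hieq : i = e + 1 := by omega
            rw [if_neg hie, hieq]
            exact ⟨huS, by rw [hdu]⟩

lemma exists_cp_step (hroot : G.Rooted v) (hdep : IsDepFun G v dep) {u : G.V}
    (hne : u ≠ rt G v dep u) :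
    ∃ w, G.adj u w ∧ dep w = dep u ∧ dKn G v dep w + 1 = dKn G v dep u := by
  set S := cls G dep u with hS
  set a := rt G v dep u with ha'
  have hrtK := rt_mem G v dep hroot hdep u
  have ha : a ∈ S := LGraph.ReachIn.mem_right hrtK
  have hru : G.ReachIn S a u := LGraph.ReachIn.symm' hrtK
  obtain ⟨r0, hr0⟩ := LGraph.winS_of_reachIn hru
  have hdku : dKn G v dep u = sInf {r | G.winS S a r u} :=
    dKn_eq_frame G v dep (mem_Kcomp_self G dep u)
  have hmem : G.winS S a (dKn G v dep u) u := by
    rw [hdku]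
    exact Nat.sInf_mem (⟨r0, hr0⟩ : {r | G.winS S a r u}.Nonempty)
  have hdpos : dKn G v dep u ≠ 0 := by
    intro h0
    rw [h0] at hmem
    exact hne hmem
  obtain ⟨e, he⟩ : ∃ e, dKn G v dep u = e + 1 := ⟨dKn G v dep u - 1, by omega⟩
  rw [he] at hmem
  rcases hmem with hmem | ⟨w, hw, hadj, -⟩
  · exfalso
    have : dKn G v dep u ≤ e := by
      rw [hdku]
      exact Nat.sInf_le hmem
    omega
  · have hwS : w ∈ S := LGraph.winS_mem ha e w hw
    have hwK : w ∈ Kcomp G dep u :=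
      LGraph.ReachIn.trans'' hrtK (LGraph.reachIn_of_winS ha e w hw)
    have hdw : dKn G v dep w = sInf {r | G.winS S a r w} := dKn_eq_frame G v dep hwK
    have hle : dKn G v dep w ≤ e := by
      rw [hdw]
      exact Nat.sInf_le hw
    have hge : e ≤ dKn G v dep w := by
      by_contra hlt
      push_neg at hlt
      have hmw : G.winS S a (dKn G v dep w) w := by
        rw [hdw]
        exact Nat.sInf_mem (⟨e, hw⟩ : {r | G.winS S a r w}.Nonempty)
      have hstep : G.winS S a (dKn G v dep w + 1) u :=
        LGraph.winS_step hmw hadj (mem_cls_self G dep u)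
      have : dKn G v dep u ≤ dKn G v dep w + 1 := by
        rw [hdku]
        exact Nat.sInf_le hstep
      omega
    exact ⟨w, G.symm hadj, hwS, by omega⟩

/-- The class parent of a node: a neighbour in the same class, one step closer
to the component root. -/
noncomputable def cp (hroot : G.Rooted v) (hdep : IsDepFun G v dep) (u : G.V) :
    Option G.V :=
  if h : u = rt G v dep u then none
  else some (exists_cp_step G v dep hroot hdep h).choose

lemma cp_spec (hroot : G.Rooted v) (hdep : IsDepFun G v dep) {u w : G.V}
    (h : cp G v dep hroot hdep u = some w) :
    G.adj u w ∧ dep w = dep u ∧ dKn G v dep w + 1 = dKn G v dep u := by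
  by_cases hne : u = rt G v dep u
  · rw [cp, dif_pos hne] at h
    simp at h
  · rw [cp, dif_neg hne] at h
    injection h with h
    rw [← h]
    exact (exists_cp_step G v dep hroot hdep hne).choose_spec

lemma cp_none (hroot : G.Rooted v) (hdep : IsDepFun G v dep) {u : G.V}
    (h : cp G v dep hroot hdep u = none) : u = rt G v dep u := by
  by_cases hne : u = rt G v dep u
  · exact hne
  · rw [cp, dif_neg hne] at h
    simp at h

lemma no_same_level (hroot : G.Rooted v) (hdep : IsDepFun G v dep) {u w : G.V}
    (hadj : G.adj u w) (hd : dep w = dep u) (heq : dKn G v dep w = dKn G v dep u) :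
    False := by
  classical
  set S := cls G dep u with hS
  set a := rt G v dep u with ha'
  have hrtK := rt_mem G v dep hroot hdep u
  have ha : a ∈ S := LGraph.ReachIn.mem_right hrtK
  have hwK : w ∈ Kcomp G dep u := LGraph.ReachIn.tail (mem_Kcomp_self G dep u) hadj hd
  set dd : G.V → ℕ := fun x => sInf {r | G.winS S a r x} with hdd
  have hddu : dKn G v dep u = dd u := dKn_eq_frame G v dep (mem_Kcomp_self G dep u)
  have hddw : dKn G v dep w = dd w := dKn_eq_frame G v dep hwK
  have hwinu : ∃ r, G.winS S a r u := LGraph.winS_of_reachIn (LGraph.ReachIn.symm' hrtK)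
  have hwinw : ∃ r, G.winS S a r w :=
    LGraph.winS_of_reachIn ((LGraph.ReachIn.symm' hrtK).trans'' hwK)
  set d := dd u with hdval
  have hdw : dd w = d := by omega
  have hne : u ≠ w := fun h => G.irrefl u (h ▸ hadj)
  by_cases hd0 : d = 0
  · have h1 : G.winS S a (dd u) u := Nat.sInf_mem hwinu
    have h2 : G.winS S a (dd w) w := Nat.sInf_mem hwinw
    rw [← hdval, hd0] at h1
    rw [hdw, hd0] at h2
    exact hne ((show u = a from h1).trans (show w = a from h2).symm)
  · obtain ⟨P, hP0, hPd, hPadj, hPlab⟩ := exists_minpath G ha dd (fun x => rfl) u hwinu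
    obtain ⟨Q, hQ0, hQd, hQadj, hQlab⟩ := exists_minpath G ha dd (fun x => rfl) w hwinw
    rw [← hdval] at hPd hPadj hPlab
    rw [hdw] at hQd hQadj hQlab
    set a' := Nat.findGreatest (fun i => P i = Q i) (d - 1) with ha''
    have hsp : P a' = Q a' := by
      rw [ha'']
      exact Nat.findGreatest_spec (P := fun i => P i = Q i) (Nat.zero_le _)
        (hP0.trans hQ0.symm)
    have hle : a' ≤ d - 1 := by
      rw [ha'']
      exact Nat.findGreatest_le _
    have hgr : ∀ i, a' < i → i ≤ d - 1 → P i ≠ Q i := by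
      intro i h1 h2
      rw [ha''] at h1
      exact Nat.findGreatest_is_greatest (P := fun i => P i = Q i) h1 h2
    have hcyc := cycleIn_of_paths G (S := S)
      (fun i => P (a' + i)) (fun j => Q (a' + j)) (d - a') (d - a')
      (by omega) (by omega)
      (fun i hi => (hPlab (a' + i) (by omega)).1)
      (fun j hj => (hQlab (a' + j) (by omega)).1)
      (fun i hi => hPadj (a' + i) (by omega))
      (fun j hj => hQadj (a' + j) (by omega))
      hsp
      (by
        show G.adj (P (a' + (d - a'))) (Q (a' + (d - a')))
        have h1 : a' + (d - a') = d := by omega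
        rw [h1, hPd, hQd]
        exact hadj)
      (fun i hi i' hi' hpe => by
        replace hpe : P (a' + i) = P (a' + i') := hpe
        have l1 := (hPlab (a' + i) (by omega)).2
        have l2 := (hPlab (a' + i') (by omega)).2
        rw [hpe] at l1
        omega)
      (fun j hj j' hj' hqe => by
        replace hqe : Q (a' + j) = Q (a' + j') := hqe
        have l1 := (hQlab (a' + j) (by omega)).2
        have l2 := (hQlab (a' + j') (by omega)).2
        rw [hqe] at l1
        omega)
      (fun i hi j hj hpq => by
        replace hpq : P (a' + i) = Q (a' + j) := hpq
        have l1 := (hPlab (a' + i) (by omega)).2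
        have l2 := (hQlab (a' + j) (by omega)).2
        rw [hpq] at l1
        have hij : i = j := by omega
        subst hij
        by_cases h0 : i = 0
        · exact ⟨h0, h0⟩
        · exfalso
          by_cases htopi : a' + i = d
          · have hPQ : P d = Q d := by
              rw [← htopi]
              exact hpq
            rw [hPd, hQd] at hPQ
            exact hne hPQ
          · exact hgr (a' + i) (by omega) (by omega) hpq)
    exact hdep.2.2 (dep u) hcyc

lemma cp_cover_aux (hroot : G.Rooted v) (hdep : IsDepFun G v dep) {u w : G.V}
    (hadj : G.adj u w) (hd : dep w = dep u)
    (hlt : dKn G v dep w + 1 = dKn G v dep u) :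
    cp G v dep hroot hdep u = some w := by
  classical
  have hune : u ≠ rt G v dep u := by
    intro h
    have h0 : dKn G v dep u = 0 := by
      unfold dKn
      exact Nat.sInf_eq_zero.mpr
        (Or.inl (show G.winS (cls G dep u) (rt G v dep u) 0 u from h))
    omega
  have hcp : cp G v dep hroot hdep u =
      some (exists_cp_step G v dep hroot hdep hune).choose := by
    rw [cp, dif_neg hune]
  obtain ⟨hadj', hd', hdk'⟩ := (exists_cp_step G v dep hroot hdep hune).choose_spec
  set w' := (exists_cp_step G v dep hroot hdep hune).choose with hw'
  by_cases hww : w' = w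
  · rw [hcp, hww]
  · exfalso
    set S := cls G dep u with hS
    set a := rt G v dep u with haa
    have hrtK := rt_mem G v dep hroot hdep u
    have ha : a ∈ S := LGraph.ReachIn.mem_right hrtK
    have hwK : w ∈ Kcomp G dep u := LGraph.ReachIn.tail (mem_Kcomp_self G dep u) hadj hd
    have hw'K : w' ∈ Kcomp G dep u :=
      LGraph.ReachIn.tail (mem_Kcomp_self G dep u) hadj' hd'
    set dd : G.V → ℕ := fun x => sInf {r | G.winS S a r x} with hdd
    have hddu : dKn G v dep u = dd u := dKn_eq_frame G v dep (mem_Kcomp_self G dep u)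
    have hddw : dKn G v dep w = dd w := dKn_eq_frame G v dep hwK
    have hddw' : dKn G v dep w' = dd w' := dKn_eq_frame G v dep hw'K
    have hwinw : ∃ r, G.winS S a r w :=
      LGraph.winS_of_reachIn ((LGraph.ReachIn.symm' hrtK).trans'' hwK)
    have hwinw' : ∃ r, G.winS S a r w' :=
      LGraph.winS_of_reachIn ((LGraph.ReachIn.symm' hrtK).trans'' hw'K)
    set e := dd w with he
    have hew' : dd w' = e := by omega
    have hddu_val : dd u = e + 1 := by omega
    by_cases he0 : e = 0
    · have h1 : G.winS S a (dd w) w := Nat.sInf_mem hwinw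
      have h2 : G.winS S a (dd w') w' := Nat.sInf_mem hwinw'
      rw [← he, he0] at h1
      rw [hew', he0] at h2
      exact hww ((show w' = a from h2).trans (show w = a from h1).symm)
    · obtain ⟨P, hP0, hPe, hPadj, hPlab⟩ := exists_minpath G ha dd (fun x => rfl) w hwinw
      obtain ⟨Q, hQ0, hQe, hQadj, hQlab⟩ := exists_minpath G ha dd (fun x => rfl) w' hwinw'
      rw [← he] at hPe hPadj hPlab
      rw [hew'] at hQe hQadj hQlab
      set a' := Nat.findGreatest (fun i => P i = Q i) (e - 1) with ha''
      have hsp : P a' = Q a' := by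
        rw [ha'']
        exact Nat.findGreatest_spec (P := fun i => P i = Q i) (Nat.zero_le _)
          (hP0.trans hQ0.symm)
      have hle : a' ≤ e - 1 := by
        rw [ha'']
        exact Nat.findGreatest_le _
      have hgr : ∀ i, a' < i → i ≤ e - 1 → P i ≠ Q i := by
        intro i h1 h2
        rw [ha''] at h1
        exact Nat.findGreatest_is_greatest (P := fun i => P i = Q i) h1 h2
      have hcyc := cycleIn_of_paths G (S := S)
        (fun i => if i ≤ e - a' then P (a' + i) else u) (fun j => Q (a' + j))
        (e - a' + 1) (e - a')
        (by omega) (by omega)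
        (fun i hi => by
          show (if i ≤ e - a' then P (a' + i) else u) ∈ S
          by_cases hie : i ≤ e - a'
          · rw [if_pos hie]
            exact (hPlab (a' + i) (by omega)).1
          · rw [if_neg hie]
            exact mem_cls_self G dep u)
        (fun j hj => (hQlab (a' + j) (by omega)).1)
        (fun i hi => by
          show G.adj (if i ≤ e - a' then P (a' + i) else u)
            (if i + 1 ≤ e - a' then P (a' + (i + 1)) else u)
          by_cases hie : i + 1 ≤ e - a'
          · rw [if_pos (by omega), if_pos hie]
            exact hPadj (a' + i) (by omega)
          · have hieq : i = e - a' := by omega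
            rw [if_pos (by omega), if_neg (by omega), hieq]
            have h1 : a' + (e - a') = e := by omega
            rw [h1, hPe]
            exact G.symm hadj)
        (fun j hj => hQadj (a' + j) (by omega))
        (by
          show (if 0 ≤ e - a' then P (a' + 0) else u) = Q (a' + 0)
          rw [if_pos (Nat.zero_le _)]
          exact hsp)
        (by
          show G.adj (if e - a' + 1 ≤ e - a' then P (a' + (e - a' + 1)) else u)
            (Q (a' + (e - a')))
          rw [if_neg (by omega)]
          have h1 : a' + (e - a') = e := by omega
          rw [h1, hQe]
          exact hadj')
        (fun i hi i' hi' hpe => by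
          replace hpe : (if i ≤ e - a' then P (a' + i) else u) =
            (if i' ≤ e - a' then P (a' + i') else u) := hpe
          by_cases h1 : i ≤ e - a' <;> by_cases h2 : i' ≤ e - a'
          · rw [if_pos h1, if_pos h2] at hpe
            have l1 := (hPlab (a' + i) (by omega)).2
            have l2 := (hPlab (a' + i') (by omega)).2
            rw [hpe] at l1
            omega
          · rw [if_pos h1, if_neg h2] at hpe
            have l1 := (hPlab (a' + i) (by omega)).2
            rw [hpe] at l1
            omega
          · rw [if_neg h1, if_pos h2] at hpe
            have l2 := (hPlab (a' + i') (by omega)).2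
            rw [← hpe] at l2
            omega
          · omega)
        (fun j hj j' hj' hqe => by
          replace hqe : Q (a' + j) = Q (a' + j') := hqe
          have l1 := (hQlab (a' + j) (by omega)).2
          have l2 := (hQlab (a' + j') (by omega)).2
          rw [hqe] at l1
          omega)
        (fun i hi j hj hpq => by
          replace hpq : (if i ≤ e - a' then P (a' + i) else u) = Q (a' + j) := hpq
          by_cases h1 : i ≤ e - a'
          · rw [if_pos h1] at hpq
            have l1 := (hPlab (a' + i) (by omega)).2
            have l2 := (hQlab (a' + j) (by omega)).2
            rw [hpq] at l1
            have hij : i = j := by omega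
            subst hij
            by_cases h0 : i = 0
            · exact ⟨h0, h0⟩
            · exfalso
              by_cases htopi : a' + i = e
              · have hPQ : P e = Q e := by
                  rw [← htopi]
                  exact hpq
                rw [hPe, hQe] at hPQ
                exact hww hPQ.symm
              · exact hgr (a' + i) (by omega) (by omega) hpq
          · rw [if_neg h1] at hpq
            have l2 := (hQlab (a' + j) (by omega)).2
            rw [← hpq] at l2
            omega)
      exact hdep.2.2 (dep u) hcyc

lemma cp_cover (hroot : G.Rooted v) (hdep : IsDepFun G v dep) {u w : G.V}
    (hadj : G.adj u w) (hd : dep w = dep u) :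
    cp G v dep hroot hdep u = some w ∨ cp G v dep hroot hdep w = some u := by
  have hwK : w ∈ Kcomp G dep u := LGraph.ReachIn.tail (mem_Kcomp_self G dep u) hadj hd
  set S := cls G dep u with hS
  set a := rt G v dep u with ha'
  have hrtK := rt_mem G v dep hroot hdep u
  have ha : a ∈ S := LGraph.ReachIn.mem_right hrtK
  have hddu : dKn G v dep u = sInf {r | G.winS S a r u} :=
    dKn_eq_frame G v dep (mem_Kcomp_self G dep u)
  have hddw : dKn G v dep w = sInf {r | G.winS S a r w} := dKn_eq_frame G v dep hwK
  have hwinu : ∃ r, G.winS S a r u := LGraph.winS_of_reachIn (LGraph.ReachIn.symm' hrtK)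
  have hwinw : ∃ r, G.winS S a r w :=
    LGraph.winS_of_reachIn ((LGraph.ReachIn.symm' hrtK).trans'' hwK)
  have hle1 : dKn G v dep u ≤ dKn G v dep w + 1 := by
    have hmw : G.winS S a (sInf {r | G.winS S a r w}) w := Nat.sInf_mem hwinw
    have hst : G.winS S a (sInf {r | G.winS S a r w} + 1) u :=
      LGraph.winS_step hmw (G.symm hadj) (mem_cls_self G dep u)
    rw [hddu, hddw]
    exact Nat.sInf_le hst
  have hle2 : dKn G v dep w ≤ dKn G v dep u + 1 := by
    have hmu : G.winS S a (sInf {r | G.winS S a r u}) u := Nat.sInf_mem hwinu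
    have hst : G.winS S a (sInf {r | G.winS S a r u} + 1) w :=
      LGraph.winS_step hmu hadj (show w ∈ S from hd)
    rw [hddu, hddw]
    exact Nat.sInf_le hst
  rcases Nat.lt_trichotomy (dKn G v dep u) (dKn G v dep w) with hc | hc | hc
  · right
    exact cp_cover_aux G v dep hroot hdep (G.symm hadj) hd.symm (by omega)
  · exact (no_same_level G v dep hroot hdep hadj hd hc.symm).elim
  · left
    exact cp_cover_aux G v dep hroot hdep hadj hd (by omega)

/-- The next node on the way to the root: the class parent if it exists,
otherwise the dep-target. -/
noncomputable def nxt (hroot : G.Rooted v) (hdep : IsDepFun G v dep) (u : G.V) : G.V :=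
  match cp G v dep hroot hdep u with
  | some w => w
  | none =>
    match dep u with
    | some y => y
    | none => v

/-- The parent function of the decomposition tree. -/
noncomputable def pf (hroot : G.Rooted v) (hdep : IsDepFun G v dep) :
    G.V → Option G.V :=
  fun u => if u = v then none else some (nxt G v dep hroot hdep u)

lemma rt_of_none {u : G.V} (hu : dep u = none) : rt G v dep u = v := by
  unfold rt
  rw [if_pos hu]

lemma pf_no_cycle (hroot : G.Rooted v) (hdep : IsDepFun G v dep) :
    ∀ x, ¬ DepCl (pf G v dep hroot hdep) x x := by
  apply no_depCl_of_lex (g := nodeRank dep) (h := dKn G v dep)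
  intro a b hab
  unfold pf at hab
  by_cases hav : a = v
  · rw [if_pos hav] at hab
    simp at hab
  · rw [if_neg hav] at hab
    injection hab with hab
    rw [← hab]
    cases hcp : cp G v dep hroot hdep a with
    | some w =>
      obtain ⟨-, hdw, hdk⟩ := cp_spec G v dep hroot hdep hcp
      have hnx : nxt G v dep hroot hdep a = w := by
        unfold nxt
        rw [hcp]
      rw [hnx]
      exact Or.inr ⟨nodeRank_congr' hdw, by omega⟩
    | none =>
      have hrt : a = rt G v dep a := cp_none G v dep hroot hdep hcp
      cases hda : dep a with
      | none =>
        exfalso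
        rw [rt_of_none G v dep hda] at hrt
        exact hav hrt
      | some y =>
        have hnx : nxt G v dep hroot hdep a = y := by
          unfold nxt
          rw [hcp, hda]
        rw [hnx]
        left
        have := nodeRank_insert hda (no_depCl_self G v dep hroot hdep y)
        omega

lemma pf_rank_lt (hroot : G.Rooted v) (hdep : IsDepFun G v dep) {a b : G.V}
    (h : pf G v dep hroot hdep a = some b) :
    nodeRank (pf G v dep hroot hdep) b < nodeRank (pf G v dep hroot hdep) a := by
  have := nodeRank_insert h (pf_no_cycle G v dep hroot hdep b)
  omega

lemma pf_none_iff (hroot : G.Rooted v) (hdep : IsDepFun G v dep) {a : G.V} :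
    pf G v dep hroot hdep a = none ↔ a = v := by
  unfold pf
  by_cases h : a = v
  · rw [if_pos h]
    simp [h]
  · rw [if_neg h]
    simp [h]

/-- The decomposition tree. -/
noncomputable def TT (hroot : G.Rooted v) (hdep : IsDepFun G v dep) : LGraph 0 where
  V := G.V
  fintypeV := G.fintypeV
  decEqV := G.decEqV
  adj a b := pf G v dep hroot hdep a = some b ∨ pf G v dep hroot hdep b = some a
  symm h := h.symm
  irrefl a h := by
    rcases h with h | h <;> exact pf_no_cycle G v dep hroot hdep a (DepCl.base h)
  lab _ _ := False

lemma TT_reach_root (hroot : G.Rooted v) (hdep : IsDepFun G v dep) :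
    ∀ a : G.V, ∃ r, (TT G v dep hroot hdep).within a r v := by
  have key : ∀ m a, nodeRank (pf G v dep hroot hdep) a = m →
      ∃ r, (TT G v dep hroot hdep).within a r v := by
    intro m
    induction m using Nat.strong_induction_on with
    | _ m ih =>
      intro a hm
      cases hpa : pf G v dep hroot hdep a with
      | none =>
        have hav : a = v := (pf_none_iff G v dep hroot hdep).mp hpa
        exact ⟨0, hav.symm⟩
      | some b =>
        have hlt := pf_rank_lt G v dep hroot hdep hpa
        obtain ⟨r, hr⟩ := ih _ (by omega) b rfl
        exact ⟨1 + r, LGraph.within_concat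
          (LGraph.within_one_of_adj (Or.inl hpa)) hr⟩
  intro a
  exact key _ a rfl

lemma TT_connected (hroot : G.Rooted v) (hdep : IsDepFun G v dep) :
    (TT G v dep hroot hdep).Connected := by
  intro a b
  obtain ⟨ra, hra⟩ := TT_reach_root G v dep hroot hdep a
  obtain ⟨rb, hrb⟩ := TT_reach_root G v dep hroot hdep b
  exact ⟨ra + rb, LGraph.within_concat hra (LGraph.within_symm hrb)⟩

lemma TT_acyclic (hroot : G.Rooted v) (hdep : IsDepFun G v dep) :
    (TT G v dep hroot hdep).Acyclic := by
  rintro ⟨n, c, hn, hinj, -, hadj⟩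
  set μ : G.V → ℕ := nodeRank (pf G v dep hroot hdep) with hμ
  obtain ⟨i0, -, hmax⟩ := Finset.exists_max_image (Finset.univ : Finset (Fin n))
    (fun i => μ (c i)) ⟨⟨0, by omega⟩, Finset.mem_univ _⟩
  have hadj1 := hadj i0
  set j1 : Fin n := ⟨(i0.val + 1) % n, Nat.mod_lt _ i0.pos⟩ with hj1
  have hsucc : pf G v dep hroot hdep (c i0) = some (c j1) := by
    rcases hadj1 with h | h
    · exact h
    · exfalso
      have h1 := pf_rank_lt G v dep hroot hdep h
      have h2 := hmax j1 (Finset.mem_univ _)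
      simp only [hμ] at h1 h2
      omega
  set j0 : Fin n := ⟨(i0.val + (n - 1)) % n, Nat.mod_lt _ i0.pos⟩ with hj0
  have hj0succ : (⟨(j0.val + 1) % n, Nat.mod_lt _ j0.pos⟩ : Fin n) = i0 := by
    apply Fin.ext
    show ((i0.val + (n - 1)) % n + 1) % n = i0.val
    rw [Nat.mod_add_mod]
    have h1 : i0.val + (n - 1) + 1 = i0.val + n := by omega
    rw [h1, Nat.add_mod_right]
    exact Nat.mod_eq_of_lt i0.isLt
  have hadj0 := hadj j0
  rw [hj0succ] at hadj0
  have hpred : pf G v dep hroot hdep (c i0) = some (c j0) := by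
    rcases hadj0 with h | h
    · exfalso
      have h1 := pf_rank_lt G v dep hroot hdep h
      have h2 := hmax j0 (Finset.mem_univ _)
      simp only [hμ] at h1 h2
      omega
    · exact h
  have hcc : c j1 = c j0 := by
    have h3 := hsucc.symm.trans hpred
    injection h3
  have hjj := hinj hcc
  have heq : (i0.val + 1) % n = (i0.val + (n - 1)) % n := by
    have h1 : j1.val = (i0.val + 1) % n := rfl
    have h2 : j0.val = (i0.val + (n - 1)) % n := rfl
    rw [← h1, ← h2, hjj]
  have hi0 := i0.isLt
  rcases Nat.lt_or_ge (i0.val + 1) n with hcase | hcase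
  · rw [Nat.mod_eq_of_lt hcase] at heq
    rcases Nat.eq_zero_or_pos i0.val with h0 | h0
    · have h1 : i0.val + (n - 1) = n - 1 := by omega
      rw [h1, Nat.mod_eq_of_lt (by omega)] at heq
      omega
    · have h1 : i0.val + (n - 1) = (i0.val - 1) + n := by omega
      rw [h1, Nat.add_mod_right, Nat.mod_eq_of_lt (by omega)] at heq
      omega
  · have h1 : i0.val + 1 = n := by omega
    have h2 : (i0.val + 1) % n = 0 := by rw [h1, Nat.mod_self]
    have h3 : i0.val + (n - 1) = (n - 2) + n := by omega
    rw [h2, h3, Nat.add_mod_right, Nat.mod_eq_of_lt (by omega)] at heq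
    omega

/-- The bags of the decomposition. -/
noncomputable def bagF (hroot : G.Rooted v) (hdep : IsDepFun G v dep) (u : G.V) :
    Set G.V :=
  {u} ∪ {w | cp G v dep hroot hdep u = some w} ∪ {x | DepCl dep u x}

lemma mem_bagF (hroot : G.Rooted v) (hdep : IsDepFun G v dep) {u x : G.V} :
    x ∈ bagF G v dep hroot hdep u ↔
      (x = u ∨ cp G v dep hroot hdep u = some x ∨ DepCl dep u x) := by
  simp [bagF, or_assoc]

lemma bagF_card (hroot : G.Rooted v) (hdep : IsDepFun G v dep) (k : ℕ)
    (hk : ∀ w, nodeRank dep w ≤ k) (u : G.V) :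
    Nat.card (bagF G v dep hroot hdep u) ≤ k + 2 := by
  have h1 : Nat.card (bagF G v dep hroot hdep u) =
      (bagF G v dep hroot hdep u).ncard := Nat.card_coe_set_eq _
  rw [h1, bagF]
  have h2 := Set.ncard_union_le (({u} : Set G.V) ∪
    {w | cp G v dep hroot hdep u = some w}) {x | DepCl dep u x}
  have h3 := Set.ncard_union_le ({u} : Set G.V)
    {w | cp G v dep hroot hdep u = some w}
  have h4 : ({u} : Set G.V).ncard = 1 := Set.ncard_singleton u
  have h5 : ({w | cp G v dep hroot hdep u = some w} : Set G.V).ncard ≤ 1 := by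
    cases hcp : cp G v dep hroot hdep u with
    | none =>
      have he : {w : G.V | (none : Option G.V) = some w} = ∅ := by
        ext w
        simp
      rw [he]
      simp
    | some w0 =>
      have he : {w : G.V | some w0 = some w} = {w0} := by
        ext w
        simp [eq_comm]
      rw [he, Set.ncard_singleton]
  have h6 : ({x | DepCl dep u x} : Set G.V).ncard = nodeRank dep u :=
    (nodeRank_eq_ncard u).symm
  have h7 := hk u
  omega

lemma bagF_subtree (hroot : G.Rooted v) (hdep : IsDepFun G v dep) (x : G.V) :
    (TT G v dep hroot hdep).ConnectedIn {t | x ∈ bagF G v dep hroot hdep t} := by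
  set B : Set G.V := {t | x ∈ bagF G v dep hroot hdep t} with hB
  have hxB : x ∈ B := by
    show x ∈ bagF G v dep hroot hdep x
    exact (mem_bagF G v dep hroot hdep).mpr (Or.inl rfl)
  have key : ∀ m u, nodeRank (pf G v dep hroot hdep) u = m → u ∈ B →
      (TT G v dep hroot hdep).ReachIn B u x := by
    intro m
    induction m using Nat.strong_induction_on with
    | _ m ih =>
      intro u hm huB
      have hmem : x = u ∨ cp G v dep hroot hdep u = some x ∨ DepCl dep u x :=
        (mem_bagF G v dep hroot hdep).mp huB
      rcases hmem with rfl | hcx | hdx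
      · exact LGraph.ReachIn.refl huB
      · have hune : u ≠ v := by
          intro h
          have hrv : rt G v dep v = v := rt_of_none G v dep hdep.1
          rw [h] at hcx
          rw [cp, dif_pos hrv.symm] at hcx
          simp at hcx
        have hpf : pf G v dep hroot hdep u = some x := by
          unfold pf
          rw [if_neg hune]
          congr 1
          unfold nxt
          rw [hcx]
        exact LGraph.ReachIn.tail (LGraph.ReachIn.refl huB) (Or.inl hpf) hxB
      · have hune : u ≠ v := by
          intro h
          obtain ⟨y, hy, -⟩ := depCl_head hdx
          rw [h, hdep.1] at hy
          simp at hy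
        have hpf : pf G v dep hroot hdep u =
            some (nxt G v dep hroot hdep u) := by
          unfold pf
          rw [if_neg hune]
        have hyB : nxt G v dep hroot hdep u ∈ B ∨ nxt G v dep hroot hdep u = x := by
          cases hcp : cp G v dep hroot hdep u with
          | some w0 =>
            obtain ⟨-, hdw0, -⟩ := cp_spec G v dep hroot hdep hcp
            have hyw : nxt G v dep hroot hdep u = w0 := by
              unfold nxt
              rw [hcp]
            left
            show x ∈ bagF G v dep hroot hdep _
            refine (mem_bagF G v dep hroot hdep).mpr (Or.inr (Or.inr ?_))
            exact depCl_congr (show dep u = dep (nxt G v dep hroot hdep u) by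
              rw [hyw, hdw0]) hdx
          | none =>
            obtain ⟨z, hz, hc⟩ := depCl_head hdx
            have hyz : nxt G v dep hroot hdep u = z := by
              unfold nxt
              rw [hcp, hz]
            rcases hc with rfl | hc
            · right
              exact hyz
            · left
              show x ∈ bagF G v dep hroot hdep _
              refine (mem_bagF G v dep hroot hdep).mpr (Or.inr (Or.inr ?_))
              rw [hyz]
              exact hc
        rcases hyB with hyB | hyx
        · have hlt := pf_rank_lt G v dep hroot hdep hpf
          have hreach := ih _ (by omega) _ rfl hyB
          exact LGraph.ReachIn.trans''
            (LGraph.ReachIn.tail (LGraph.ReachIn.refl huB) (Or.inl hpf) hyB) hreach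
        · rw [hyx] at hpf
          exact LGraph.ReachIn.tail (LGraph.ReachIn.refl huB) (Or.inl hpf) hxB
  intro a haB b hbB
  exact LGraph.ReachIn.trans'' (key _ a rfl haB) (LGraph.ReachIn.symm' (key _ b rfl hbB))

lemma treewidth_le_of_depfun (hroot : G.Rooted v) (hdep : IsDepFun G v dep) (k : ℕ)
    (hk : ∀ w, nodeRank dep w ≤ k) : treewidth G ≤ k + 1 := by
  apply Nat.sInf_le
  refine ⟨⟨TT G v dep hroot hdep, TT_connected G v dep hroot hdep,
    TT_acyclic G v dep hroot hdep, bagF G v dep hroot hdep, ?_, ?_, ?_⟩, ?_⟩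
  · intro u
    exact ⟨u, (mem_bagF G v dep hroot hdep).mpr (Or.inl rfl)⟩
  · intro u w hadj
    rcases hdep.2.1 hadj with heq | huw | hwu
    · rcases cp_cover G v dep hroot hdep hadj heq.symm with h | h
      · exact ⟨u, (mem_bagF G v dep hroot hdep).mpr (Or.inl rfl),
          (mem_bagF G v dep hroot hdep).mpr (Or.inr (Or.inl h))⟩
      · exact ⟨w, (mem_bagF G v dep hroot hdep).mpr (Or.inr (Or.inl h)),
          (mem_bagF G v dep hroot hdep).mpr (Or.inl rfl)⟩
    · exact ⟨w, (mem_bagF G v dep hroot hdep).mpr (Or.inr (Or.inr huw)),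
        (mem_bagF G v dep hroot hdep).mpr (Or.inl rfl)⟩
    · exact ⟨u, (mem_bagF G v dep hroot hdep).mpr (Or.inl rfl),
        (mem_bagF G v dep hroot hdep).mpr (Or.inr (Or.inr hwu))⟩
  · exact bagF_subtree G v dep hroot hdep
  · intro t
    exact bagF_card G v dep hroot hdep k hk t

end TreewidthPart

/-- For every rooted graph `(G,v)`:
(1) `tree-width(G) − 1 ≤ ego-rank(G,v) ≤ |V|`;
(2) `ego-rank(G,v) = 0` iff `G` is acyclic;
(3) `ego-rank(G,v) ≤ 1` whenever `(G,v)` is c-acyclic (hence `= 1` if moreover `G`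
has a cycle). -/
theorem egoRank_bounds (p : ℕ) (G : LGraph p) (v : G.V) (hroot : G.Rooted v) :
    (treewidth G - 1 ≤ egoRank G v ∧ egoRank G v ≤ Fintype.card G.V) ∧
    (egoRank G v = 0 ↔ G.Acyclic) ∧
    (G.CAcyclic v → egoRank G v ≤ 1) ∧
    (G.CAcyclic v → ¬ G.Acyclic → egoRank G v = 1) := by
  have hmem : egoRank G v ∈ {k | ∃ dep, IsDepFun G v dep ∧ ∀ w, nodeRank dep w ≤ k} :=
    Nat.sInf_mem (egoRank_set_nonempty G v)
  obtain ⟨dep, hdep, hk⟩ := hmem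
  have htw : treewidth G ≤ egoRank G v + 1 :=
    treewidth_le_of_depfun G v dep hroot hdep _ hk
  refine ⟨⟨by omega, egoRank_le_card G v⟩, egoRank_zero_iff G v, egoRank_le_one G v, ?_⟩
  intro hca hnac
  have h1 := egoRank_le_one G v hca
  have h2 : egoRank G v ≠ 0 := fun h => hnac ((egoRank_zero_iff G v).mp h)
  omega
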